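/- arXiv:2207.11008 — 4 statements merged into one kernel-verified Lean document; each statement's English description precedes it below -/
import Mathlib

section
/- (Homological equation with Diophantine frequencies) Let γ ∈ (0,1], τ > 0, m ∈ ℝ, s ≥ s₀, and let Λ ∋ λ = (ω,ζ) ↦ R(λ) be a Lipschitz family of linear operators in OPM^m_{s+2τ+1}. For any λ ∈ Λ(γ,τ), define Ψ by Ψ̂(ℓ)_j^{j'} := −R̂(ℓ)_j^{j'} / ( i(ω·ℓ + ζ·(j−j')) ) for (ℓ,j,j') ≠ (0,j,j), and Ψ̂(0)_j^j := 0. Then Ψ ∈ OPM^m_s solves the homological equation ω·∂_φ Ψ + [ζ·∇, Ψ] + R = D_R (equivalently, i(ω·ℓ + ζ·(j−j')) Ψ̂(ℓ)_j^{j'} + R̂(ℓ)_j^{j'} = 0 for all (ℓ,j,j') ≠ (0,j,j)), and satisfies |Ψ|_{m,s}^{Lip(γ)} ≤ C γ^{−1} |R|_{m,s+2τ+1}^{Lip(γ)}. Moreover, if R leaves invariant the space of functions with zero average in x, so does Ψ. -/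
open scoped BigOperators ENNReal
open MeasureTheory Filter

noncomputable section

/-- Frequency lattice `ℤ^d`. -/
abbrev Zd (d : ℕ) := Fin d → ℤ
/-- Frequency lattice `ℤ²`. -/
abbrev Z2 := Fin 2 → ℤ
/-- Full frequency lattice `ℤ^d × ℤ²` of `𝕋^d × 𝕋²`. -/
abbrev Freq (d : ℕ) := Zd d × Z2
/-- A function on `𝕋^d × 𝕋²`, identified with its Fourier coefficients. -/
abbrev Fn (d : ℕ) := Freq d → ℂ
/-- The parameter space `ℝ^d × ℝ²` of `λ = (ω, ζ)`. -/
abbrev Param (d : ℕ) := (Fin d → ℝ) × (Fin 2 → ℝ)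
/-- A linear operator identified with its matrix coefficients `R̂(ℓ)_j^{j'}`. -/
abbrev OpCoef (d : ℕ) := Zd d → Z2 → Z2 → ℂ

/-- Coercion `ℝ → ℂ`. -/
def cR (x : ℝ) : ℂ := (x : ℂ)

/-- Euclidean norm `|ℓ|` of `ℓ ∈ ℤ^d`. -/
def lnorm {d : ℕ} (ℓ : Zd d) : ℝ := Real.sqrt (∑ i, ((ℓ i : ℝ)) ^ 2)
/-- Euclidean norm `|j|` of `j ∈ ℤ²`. -/
def jnorm (j : Z2) : ℝ := Real.sqrt (((j 0 : ℝ)) ^ 2 + ((j 1 : ℝ)) ^ 2)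
/-- `⟨ℓ⟩ := max{1, |ℓ|}`. -/
def lwt {d : ℕ} (ℓ : Zd d) : ℝ := max 1 (lnorm ℓ)
/-- `⟨j⟩ := max{1, |j|}`. -/
def jwt (j : Z2) : ℝ := max 1 (jnorm j)
/-- `⟨ℓ, j⟩ := max{1, |ℓ|, |j|}`. -/
def wt {d : ℕ} (ℓ : Zd d) (j : Z2) : ℝ := max 1 (max (lnorm ℓ) (jnorm j))

/-- Pairing `x · k` of a real vector with a lattice vector. -/
def dotP {n : ℕ} (x : Fin n → ℝ) (k : Fin n → ℤ) : ℝ := ∑ i, x i * (k i : ℝ)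

/-- The fixed Sobolev threshold `s₀ := ⌊(d+2)/2⌋ + 2`. -/
def s0 (d : ℕ) : ℝ := (((d + 2) / 2 : ℕ) : ℝ) + 2

/-- The Sobolev norm `‖u‖_s` (valued in `ℝ≥0∞`). -/
def sobNorm {d : ℕ} (s : ℝ) (u : Fn d) : ℝ≥0∞ :=
  (∑' p : Freq d, ENNReal.ofReal (wt p.1 p.2 ^ (2 * s)) * (‖u p‖₊ : ℝ≥0∞) ^ 2) ^ ((1 : ℝ) / 2)

/-- Zero average in the space variable `x`: membership in `H^s_0` (Fourier side). -/
def zeroAvg {d : ℕ} (u : Fn d) : Prop := ∀ ℓ : Zd d, u (ℓ, 0) = 0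

/-- The weighted Lipschitz Sobolev norm `‖u‖_s^{Lip(γ)}` of a family `λ ↦ u(λ)`. -/
def lipSob {d : ℕ} (γ s : ℝ) (Λ : Set (Param d)) (u : Param d → Fn d) : ℝ≥0∞ :=
  (⨆ lam ∈ Λ, sobNorm s (u lam)) +
    ENNReal.ofReal γ *
      ⨆ (l1 : Λ) (l2 : Λ) (_ : l1 ≠ l2),
        sobNorm (s - 1) (fun p => u (↑l1) p - u (↑l2) p) / edist (l1 : Param d) (l2 : Param d)

/-- The decay norm `|R|_{m,s}` of an operator (valued in `ℝ≥0∞`). -/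
def decayNorm {d : ℕ} (m s : ℝ) (R : OpCoef d) : ℝ≥0∞ :=
  ⨆ j' : Z2, ENNReal.ofReal (jwt j' ^ (-m)) *
    (∑' p : Freq d,
      ENNReal.ofReal (wt p.1 (p.2 - j') ^ (2 * s)) * (‖R p.1 p.2 j'‖₊ : ℝ≥0∞) ^ 2) ^ ((1 : ℝ) / 2)

/-- Difference of two operators. -/
def opSub {d : ℕ} (R Q : OpCoef d) : OpCoef d := fun ℓ j j' => R ℓ j j' - Q ℓ j j'

/-- The weighted Lipschitz decay norm `|R|_{m,s}^{Lip(γ)}` of a family `λ ↦ R(λ)`. -/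
def lipDecay {d : ℕ} (γ m s : ℝ) (Λ : Set (Param d)) (R : Param d → OpCoef d) : ℝ≥0∞ :=
  (⨆ lam ∈ Λ, decayNorm m s (R lam)) +
    ENNReal.ofReal γ *
      ⨆ (l1 : Λ) (l2 : Λ) (_ : l1 ≠ l2),
        decayNorm m (s - 1) (opSub (R ↑l1) (R ↑l2)) / edist (l1 : Param d) (l2 : Param d)

/-- The weighted Lipschitz norm `|q|^{Lip(γ)}` of a scalar family `λ ↦ q(λ)`. -/
def lipC {d : ℕ} (γ : ℝ) (Λ : Set (Param d)) (g : Param d → ℂ) : ℝ≥0∞ :=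
  (⨆ lam ∈ Λ, (‖g lam‖₊ : ℝ≥0∞)) +
    ENNReal.ofReal γ *
      ⨆ (l1 : Λ) (l2 : Λ) (_ : l1 ≠ l2),
        (‖g ↑l1 - g ↑l2‖₊ : ℝ≥0∞) / edist (l1 : Param d) (l2 : Param d)

/-- Action of an operator on a function. -/
def opApply {d : ℕ} (R : OpCoef d) (u : Fn d) : Fn d :=
  fun p => ∑' q : Freq d, R (p.1 - q.1) p.2 q.2 * u q

/-- Composition of operators (matrix product). -/
def opMul {d : ℕ} (R Q : OpCoef d) : OpCoef d :=
  fun ℓ j j' => ∑' k : Freq d, R (ℓ - k.1) j k.2 * Q k.1 k.2 j'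

/-- The identity operator. -/
def idOp {d : ℕ} : OpCoef d := fun ℓ j j' => if ℓ = 0 ∧ j = j' then 1 else 0

/-- Sum of two operators. -/
def opAdd {d : ℕ} (R Q : OpCoef d) : OpCoef d := fun ℓ j j' => R ℓ j j' + Q ℓ j j'

/-- The diagonal part `D_R` of an operator. -/
def diagPart {d : ℕ} (R : OpCoef d) : OpCoef d :=
  fun ℓ j j' => if ℓ = 0 ∧ j = j' then R 0 j j else 0

/-- Powers `R^n` of an operator. -/
def opPow {d : ℕ} (R : OpCoef d) : ℕ → OpCoef d
  | 0 => idOp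
  | n + 1 => opMul R (opPow R n)

/-- The smoothing truncation `Π_N` on functions. -/
def truncF {d : ℕ} (N : ℝ) (u : Fn d) : Fn d :=
  fun p => if wt p.1 p.2 ≤ N then u p else 0

/-- The truncation `Π_N` on operators. -/
def truncOp {d : ℕ} (N : ℝ) (R : OpCoef d) : OpCoef d :=
  fun ℓ j j' => if lnorm ℓ ≤ N ∧ jnorm (j - j') ≤ N then R ℓ j j' else 0

/-- Product of functions (convolution of Fourier coefficients). -/
def mulF {d : ℕ} (u v : Fn d) : Fn d :=
  fun p => ∑' q : Freq d, u q * v (p.1 - q.1, p.2 - q.2)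

/-- The multiplication operator `M_a` by a function `a`. -/
def mulOp {d : ℕ} (a : Fn d) : OpCoef d := fun ℓ j j' => a (ℓ, j - j')

/-- `ξ₁^⊥ · ξ₂` with `ξ^⊥ := (−ξ₂, ξ₁)`. -/
def perpDot (x y : Z2) : ℤ := (-(x 1)) * y 0 + x 0 * y 1
/-- `|j|²` for `j ∈ ℤ²`. -/
def nsq (j : Z2) : ℤ := j 0 ^ 2 + j 1 ^ 2

/-- Fourier multiplier of the bilinear map `(v,w) ↦ (∇_⊥(−Δ)^{−1}v)·∇w`. -/
def emult (x y : Z2) : ℂ :=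
  if x = 0 then 0 else Complex.I * (perpDot x y : ℂ) / (nsq x : ℂ)

/-- The Euler nonlinearity `N(v,w) = (∇_⊥(−Δ)^{−1}v)·∇w` in Fourier coefficients. -/
def eulerN {d : ℕ} (v w : Fn d) : Fn d :=
  fun p => ∑' q : Freq d, emult q.2 (p.2 - q.2) * v q * w (p.1 - q.1, p.2 - q.2)

/-- Coefficient-wise formulation of the (forced, rescaled) Navier–Stokes vorticity
equation `ω·∂_φ v + ζ·∇v − νΔv + ε(Π₀^⊥(u·∇v) − F) = 0`, `u = ∇_⊥(−Δ)^{−1}v`,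
on zero-average functions.  For `ν = 0` this is the Euler equation. -/
def SolvesNS {d : ℕ} (ω : Fin d → ℝ) (ζ : Fin 2 → ℝ) (ν ε : ℝ) (F v : Fn d) : Prop :=
  ∀ p : Freq d, p.2 ≠ 0 →
    (Complex.I * cR (dotP ω p.1 + dotP ζ p.2) + cR (ν * ((nsq p.2 : ℤ) : ℝ))) * v p
      + cR ε * (eulerN v v p - F p) = 0

/-- Fourier coefficients of `F = ∇ × f = ∂_{x₁} f₂ − ∂_{x₂} f₁`. -/
def curlC {d : ℕ} (fh : Freq d → Fin 2 → ℂ) : Fn d :=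
  fun p => Complex.I * (((p.2 0 : ℤ) : ℂ) * fh p 1 - ((p.2 1 : ℤ) : ℂ) * fh p 0)

/-- The set `Λ(γ,τ)` of Diophantine parameters in `Λ`. -/
def dioSet {d : ℕ} (Λ : Set (Param d)) (γ τ : ℝ) : Set (Param d) :=
  {lam | lam ∈ Λ ∧ ∀ (ℓ : Zd d) (j : Z2), ¬(ℓ = 0 ∧ j = 0) →
    γ / (lnorm ℓ + jnorm j) ^ τ ≤ |dotP lam.1 ℓ + dotP lam.2 j|}

/-- The KAM scales `N_{n-1}` (so `Nm1 N0 0 = N_{-1} = 1` and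
`Nm1 N0 (n+1) = N_n = N_0^{(3/2)^n}`). -/
def Nm1 (N0 : ℝ) : ℕ → ℝ := fun n => if n = 0 then 1 else N0 ^ (((3 : ℝ) / 2) ^ (n - 1))


/-- The solution `Ψ` of the homological equation, defined for `λ = (ω,ζ)` by
`Ψ̂(ℓ)_j^{j'} = −R̂(ℓ)_j^{j'}/(i(ω·ℓ + ζ·(j−j')))` off the diagonal and `0` on it. -/
def hPsi {d : ℕ} (lam : Param d) (R : OpCoef d) : OpCoef d :=
  fun ℓ j j' =>
    if ℓ = 0 ∧ j = j' then 0
    else - R ℓ j j' / (Complex.I * cR (dotP lam.1 ℓ + dotP lam.2 (j - j')))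

namespace Hom

variable {d : ℕ}

lemma lnorm_nonneg (ℓ : Zd d) : 0 ≤ lnorm ℓ := Real.sqrt_nonneg _
lemma jnorm_nonneg (j : Z2) : 0 ≤ jnorm j := Real.sqrt_nonneg _
lemma one_le_wt (ℓ : Zd d) (j : Z2) : 1 ≤ wt ℓ j := le_max_left _ _
lemma wt_pos (ℓ : Zd d) (j : Z2) : 0 < wt ℓ j := lt_of_lt_of_le one_pos (one_le_wt ℓ j)
lemma lnorm_le_wt (ℓ : Zd d) (j : Z2) : lnorm ℓ ≤ wt ℓ j :=
  le_trans (le_max_left _ _) (le_max_right _ _)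
lemma jnorm_le_wt (ℓ : Zd d) (j : Z2) : jnorm j ≤ wt ℓ j :=
  le_trans (le_max_right _ _) (le_max_right _ _)

lemma lnorm_pos {ℓ : Zd d} (h : ℓ ≠ 0) : 0 < lnorm ℓ := by
  obtain ⟨i, hi⟩ := Function.ne_iff.mp h
  have hne : ((ℓ i : ℝ)) ≠ 0 := by simpa using hi
  have hi' : (0:ℝ) < ((ℓ i : ℝ))^2 := by positivity
  refine Real.sqrt_pos.mpr (lt_of_lt_of_le hi' ?_)
  exact Finset.single_le_sum (f := fun i => ((ℓ i : ℝ))^2) (fun i _ => by positivity)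
    (Finset.mem_univ i)

lemma jnorm_pos {j : Z2} (h : j ≠ 0) : 0 < jnorm j := by
  obtain ⟨i, hi⟩ := Function.ne_iff.mp h
  have hne : ((j i : ℝ)) ≠ 0 := by simpa using hi
  have hi' : (0:ℝ) < ((j i : ℝ))^2 := by positivity
  apply Real.sqrt_pos.mpr
  have h01 : i = 0 ∨ i = 1 := by omega
  rcases h01 with h01 | h01 <;> subst h01 <;>
    nlinarith [sq_nonneg ((j 0 : ℝ)), sq_nonneg ((j 1 : ℝ))]

lemma int_abs_le_lnorm (ℓ : Zd d) (i : Fin d) : |((ℓ i : ℝ))| ≤ lnorm ℓ := by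
  rw [← Real.sqrt_sq_eq_abs]
  apply Real.sqrt_le_sqrt
  exact Finset.single_le_sum (f := fun i => ((ℓ i : ℝ))^2) (fun i _ => by positivity)
    (Finset.mem_univ i)

lemma int_abs_le_jnorm (j : Z2) (i : Fin 2) : |((j i : ℝ))| ≤ jnorm j := by
  rw [← Real.sqrt_sq_eq_abs]
  apply Real.sqrt_le_sqrt
  have h01 : i = 0 ∨ i = 1 := by omega
  rcases h01 with h01 | h01 <;> subst h01 <;>
    nlinarith [sq_nonneg ((j 0 : ℝ)), sq_nonneg ((j 1 : ℝ))]

lemma dot_sub_le (l1 l2 : Param d) (ℓ : Zd d) (k : Z2) :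
    |(dotP l1.1 ℓ + dotP l1.2 k) - (dotP l2.1 ℓ + dotP l2.2 k)| ≤
      ((d : ℝ) + 2) * dist l1 l2 * wt ℓ k := by
  have hw := wt_pos ℓ k
  have hdist : (0:ℝ) ≤ dist l1 l2 := dist_nonneg
  have h1 : |dotP l1.1 ℓ - dotP l2.1 ℓ| ≤ (d : ℝ) * dist l1 l2 * wt ℓ k := by
    have he : dotP l1.1 ℓ - dotP l2.1 ℓ = ∑ i, (l1.1 i - l2.1 i) * (ℓ i : ℝ) := by
      simp [dotP, ← Finset.sum_sub_distrib, sub_mul]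
    rw [he]
    calc |∑ i, (l1.1 i - l2.1 i) * (ℓ i : ℝ)| ≤ ∑ i, |(l1.1 i - l2.1 i) * (ℓ i : ℝ)| :=
          Finset.abs_sum_le_sum_abs _ _
      _ ≤ ∑ _i : Fin d, dist l1 l2 * wt ℓ k := by
          apply Finset.sum_le_sum
          intro i _
          rw [abs_mul]
          apply mul_le_mul _ _ (abs_nonneg _) hdist
          · calc |l1.1 i - l2.1 i| = dist (l1.1 i) (l2.1 i) := (Real.dist_eq _ _).symm
              _ ≤ dist l1.1 l2.1 := dist_le_pi_dist _ _ i
              _ ≤ dist l1 l2 := by rw [Prod.dist_eq]; exact le_max_left _ _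
          · exact le_trans (int_abs_le_lnorm ℓ i) (lnorm_le_wt ℓ k)
      _ = (d : ℝ) * dist l1 l2 * wt ℓ k := by simp [mul_assoc]
  have h2 : |dotP l1.2 k - dotP l2.2 k| ≤ 2 * dist l1 l2 * wt ℓ k := by
    have he : dotP l1.2 k - dotP l2.2 k = ∑ i, (l1.2 i - l2.2 i) * (k i : ℝ) := by
      simp [dotP, ← Finset.sum_sub_distrib, sub_mul]
      ring
    rw [he]
    calc |∑ i, (l1.2 i - l2.2 i) * (k i : ℝ)| ≤ ∑ i, |(l1.2 i - l2.2 i) * (k i : ℝ)| :=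
          Finset.abs_sum_le_sum_abs _ _
      _ ≤ ∑ _i : Fin 2, dist l1 l2 * wt ℓ k := by
          apply Finset.sum_le_sum
          intro i _
          rw [abs_mul]
          apply mul_le_mul _ _ (abs_nonneg _) hdist
          · calc |l1.2 i - l2.2 i| = dist (l1.2 i) (l2.2 i) := (Real.dist_eq _ _).symm
              _ ≤ dist l1.2 l2.2 := dist_le_pi_dist _ _ i
              _ ≤ dist l1 l2 := by rw [Prod.dist_eq]; exact le_max_right _ _
          · exact le_trans (int_abs_le_jnorm k i) (jnorm_le_wt ℓ k)
      _ = 2 * dist l1 l2 * wt ℓ k := by simp [mul_assoc]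
  calc |(dotP l1.1 ℓ + dotP l1.2 k) - (dotP l2.1 ℓ + dotP l2.2 k)|
      = |(dotP l1.1 ℓ - dotP l2.1 ℓ) + (dotP l1.2 k - dotP l2.2 k)| := by congr 1; ring
    _ ≤ |dotP l1.1 ℓ - dotP l2.1 ℓ| + |dotP l1.2 k - dotP l2.2 k| := abs_add_le _ _
    _ ≤ (d : ℝ) * dist l1 l2 * wt ℓ k + 2 * dist l1 l2 * wt ℓ k := add_le_add h1 h2
    _ = ((d : ℝ) + 2) * dist l1 l2 * wt ℓ k := by ring


/-- column norm -/
def colNorm {d : ℕ} (s : ℝ) (j' : Z2) (Q : OpCoef d) : ℝ≥0∞ :=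
  (∑' p : Freq d,
    ENNReal.ofReal (wt p.1 (p.2 - j') ^ (2 * s)) * (‖Q p.1 p.2 j'‖₊ : ℝ≥0∞) ^ 2) ^ ((1 : ℝ) / 2)

lemma decay_eq (m s : ℝ) (Q : OpCoef d) :
    decayNorm m s Q = ⨆ j' : Z2, ENNReal.ofReal (jwt j' ^ (-m)) * colNorm s j' Q := rfl

lemma rpow_two_eq (x : ℝ≥0∞) : x ^ (2 : ℝ) = x ^ (2 : ℕ) := by
  rw [show ((2:ℝ)) = ((2:ℕ):ℝ) by norm_num, ENNReal.rpow_natCast]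

lemma term_eq (s : ℝ) (k : Z2) (ℓ : Zd d) (z : ℂ) :
    ENNReal.ofReal (wt ℓ k ^ (2 * s)) * (‖z‖₊ : ℝ≥0∞) ^ 2
      = ENNReal.ofReal (wt ℓ k ^ (2 * s) * ‖z‖ ^ 2) := by
  rw [ENNReal.ofReal_mul (Real.rpow_nonneg (wt_pos ℓ k).le _), ENNReal.ofReal_pow (norm_nonneg _),
    ofReal_norm, enorm_eq_nnnorm]

lemma rpow_arith (w : ℝ) (hw : 0 < w) (s t : ℝ) :
    w ^ (2 * s) * (w ^ t) ^ 2 = w ^ (2 * (s + t)) := by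
  rw [← Real.rpow_natCast (w ^ t) 2, ← Real.rpow_mul hw.le, ← Real.rpow_add hw]
  norm_num
  ring_nf

lemma colNorm_le_of_le {Q R : OpCoef d} {a t : ℝ} (ha : 0 ≤ a) (s : ℝ) (j' : Z2)
    (h : ∀ ℓ j, ‖Q ℓ j j'‖ ≤ a * wt ℓ (j - j') ^ t * ‖R ℓ j j'‖) :
    colNorm s j' Q ≤ ENNReal.ofReal a * colNorm (s + t) j' R := by
  have key : ∀ p : Freq d,
      ENNReal.ofReal (wt p.1 (p.2 - j') ^ (2 * s)) * (‖Q p.1 p.2 j'‖₊ : ℝ≥0∞) ^ 2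
        ≤ ENNReal.ofReal a ^ 2 *
          (ENNReal.ofReal (wt p.1 (p.2 - j') ^ (2 * (s + t))) * (‖R p.1 p.2 j'‖₊ : ℝ≥0∞) ^ 2) := by
    intro p
    rw [term_eq, term_eq, ← ENNReal.ofReal_pow ha, ← ENNReal.ofReal_mul (by positivity)]
    apply ENNReal.ofReal_le_ofReal
    set w := wt p.1 (p.2 - j') with hwdef
    have hw : 0 < w := wt_pos _ _
    calc w ^ (2 * s) * ‖Q p.1 p.2 j'‖ ^ 2
        ≤ w ^ (2 * s) * (a * w ^ t * ‖R p.1 p.2 j'‖) ^ 2 := by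
          apply mul_le_mul_of_nonneg_left _ (Real.rpow_nonneg hw.le _)
          exact pow_le_pow_left₀ (norm_nonneg _) (h p.1 p.2) 2
      _ = a ^ 2 * ((w ^ (2 * s) * (w ^ t) ^ 2) * ‖R p.1 p.2 j'‖ ^ 2) := by ring
      _ = a ^ 2 * (w ^ (2 * (s + t)) * ‖R p.1 p.2 j'‖ ^ 2) := by rw [rpow_arith w hw]
  calc colNorm s j' Q
      ≤ (∑' p : Freq d, ENNReal.ofReal a ^ 2 *
          (ENNReal.ofReal (wt p.1 (p.2 - j') ^ (2 * (s + t))) * (‖R p.1 p.2 j'‖₊ : ℝ≥0∞) ^ 2))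
            ^ ((1 : ℝ) / 2) :=
        ENNReal.rpow_le_rpow (ENNReal.tsum_le_tsum key) (by norm_num)
    _ = ENNReal.ofReal a * colNorm (s + t) j' R := by
        rw [ENNReal.tsum_mul_left, ENNReal.mul_rpow_of_nonneg _ _ (by norm_num : (0:ℝ) ≤ 1/2)]
        congr 1
        rw [← ENNReal.rpow_natCast (ENNReal.ofReal a) 2, ← ENNReal.rpow_mul]
        norm_num

lemma ofReal_sq_wt (s : ℝ) (ℓ : Zd d) (k : Z2) :
    ENNReal.ofReal (wt ℓ k ^ (2 * s)) = ENNReal.ofReal (wt ℓ k ^ s) ^ 2 := by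
  rw [← ENNReal.ofReal_pow (Real.rpow_nonneg (wt_pos ℓ k).le _), ← Real.rpow_natCast (wt ℓ k ^ s) 2,
    ← Real.rpow_mul (wt_pos ℓ k).le]
  norm_num [mul_comm]

lemma colNorm_add_le {Q A B : OpCoef d} (s : ℝ) (j' : Z2)
    (h : ∀ ℓ j, ‖Q ℓ j j'‖ ≤ ‖A ℓ j j'‖ + ‖B ℓ j j'‖) :
    colNorm s j' Q ≤ colNorm s j' A + colNorm s j' B := by
  set f : Freq d → ℝ≥0∞ :=
    fun p => ENNReal.ofReal (wt p.1 (p.2 - j') ^ s) * (‖A p.1 p.2 j'‖₊ : ℝ≥0∞) with hf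
  set g : Freq d → ℝ≥0∞ :=
    fun p => ENNReal.ofReal (wt p.1 (p.2 - j') ^ s) * (‖B p.1 p.2 j'‖₊ : ℝ≥0∞) with hg
  have hsq : ∀ (F : OpCoef d) (p : Freq d),
      ENNReal.ofReal (wt p.1 (p.2 - j') ^ (2 * s)) * (‖F p.1 p.2 j'‖₊ : ℝ≥0∞) ^ 2
        = (ENNReal.ofReal (wt p.1 (p.2 - j') ^ s) * (‖F p.1 p.2 j'‖₊ : ℝ≥0∞)) ^ 2 := by
    intro F p
    rw [mul_pow, ofReal_sq_wt]
  have key : ∀ p : Freq d,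
      ENNReal.ofReal (wt p.1 (p.2 - j') ^ (2 * s)) * (‖Q p.1 p.2 j'‖₊ : ℝ≥0∞) ^ 2
        ≤ (f p + g p) ^ (2 : ℝ) := by
    intro p
    rw [rpow_two_eq (f p + g p), hsq Q p]
    have hQ : (‖Q p.1 p.2 j'‖₊ : ℝ≥0∞) ≤ (‖A p.1 p.2 j'‖₊ : ℝ≥0∞) + (‖B p.1 p.2 j'‖₊ : ℝ≥0∞) := by
      rw [← enorm_eq_nnnorm, ← ofReal_norm, ← enorm_eq_nnnorm, ← ofReal_norm,
        ← enorm_eq_nnnorm, ← ofReal_norm, ← ENNReal.ofReal_add (norm_nonneg _) (norm_nonneg _)]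
      exact ENNReal.ofReal_le_ofReal (h p.1 p.2)
    have : ENNReal.ofReal (wt p.1 (p.2 - j') ^ s) * (‖Q p.1 p.2 j'‖₊ : ℝ≥0∞) ≤ f p + g p := by
      rw [hf, hg]
      calc ENNReal.ofReal (wt p.1 (p.2 - j') ^ s) * (‖Q p.1 p.2 j'‖₊ : ℝ≥0∞)
          ≤ ENNReal.ofReal (wt p.1 (p.2 - j') ^ s) *
              ((‖A p.1 p.2 j'‖₊ : ℝ≥0∞) + (‖B p.1 p.2 j'‖₊ : ℝ≥0∞)) := mul_le_mul_right hQ _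
        _ = _ := by rw [mul_add]
    exact pow_le_pow_left' this 2
  have mink : (∑' p : Freq d, (f p + g p) ^ (2 : ℝ)) ^ ((1:ℝ)/2)
      ≤ (∑' p, f p ^ (2 : ℝ)) ^ ((1:ℝ)/2) + (∑' p, g p ^ (2 : ℝ)) ^ ((1:ℝ)/2) := by
    have h2 := ENNReal.lintegral_Lp_add_le (μ := Measure.count)
      (f := f) (g := g) (measurable_of_countable f).aemeasurable
      (measurable_of_countable g).aemeasurable one_le_two
    simpa only [lintegral_count, Pi.add_apply] using h2
  have hfsum : ∀ (F : OpCoef d), (∑' p : Freq d,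
      (ENNReal.ofReal (wt p.1 (p.2 - j') ^ s) * (‖F p.1 p.2 j'‖₊ : ℝ≥0∞)) ^ (2 : ℝ)) ^ ((1:ℝ)/2)
        = colNorm s j' F := by
    intro F
    unfold colNorm
    congr 1
    apply tsum_congr
    intro p
    rw [rpow_two_eq, hsq F p]
  calc colNorm s j' Q
      ≤ (∑' p : Freq d, (f p + g p) ^ (2:ℝ)) ^ ((1:ℝ)/2) :=
        ENNReal.rpow_le_rpow (ENNReal.tsum_le_tsum key) (by norm_num)
    _ ≤ (∑' p, f p ^ (2:ℝ)) ^ ((1:ℝ)/2) + (∑' p, g p ^ (2:ℝ)) ^ ((1:ℝ)/2) := mink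
    _ = colNorm s j' A + colNorm s j' B := by rw [hf, hg, hfsum A, hfsum B]

lemma decay_le_of_le {Q R : OpCoef d} {a t : ℝ} (ha : 0 ≤ a) (m s : ℝ)
    (h : ∀ ℓ j j', ‖Q ℓ j j'‖ ≤ a * wt ℓ (j - j') ^ t * ‖R ℓ j j'‖) :
    decayNorm m s Q ≤ ENNReal.ofReal a * decayNorm m (s + t) R := by
  rw [decay_eq, decay_eq]
  refine iSup_le fun j' => ?_
  calc ENNReal.ofReal (jwt j' ^ (-m)) * colNorm s j' Q
      ≤ ENNReal.ofReal (jwt j' ^ (-m)) * (ENNReal.ofReal a * colNorm (s + t) j' R) :=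
        mul_le_mul_right (colNorm_le_of_le ha s j' (fun ℓ j => h ℓ j j')) _
    _ = ENNReal.ofReal a * (ENNReal.ofReal (jwt j' ^ (-m)) * colNorm (s + t) j' R) := by ring
    _ ≤ ENNReal.ofReal a * ⨆ j'' : Z2, ENNReal.ofReal (jwt j'' ^ (-m)) * colNorm (s + t) j'' R :=
        mul_le_mul_right
          (le_iSup (fun j'' => ENNReal.ofReal (jwt j'' ^ (-m)) * colNorm (s + t) j'' R) j') _

lemma decay_mono {Q : OpCoef d} (m : ℝ) {s s' : ℝ} (hss : s ≤ s') :
    decayNorm m s Q ≤ decayNorm m s' Q := by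
  have h := decay_le_of_le (Q := Q) (R := Q) (a := 1) (t := s' - s) zero_le_one m s
    (fun ℓ j j' => by
      have h1 : (1:ℝ) ≤ wt ℓ (j - j') ^ (s' - s) :=
        Real.one_le_rpow (one_le_wt _ _) (by linarith)
      nlinarith [norm_nonneg (Q ℓ j j')])
  simpa using h

lemma decay_add_le {Q A B : OpCoef d} (m s : ℝ)
    (h : ∀ ℓ j j', ‖Q ℓ j j'‖ ≤ ‖A ℓ j j'‖ + ‖B ℓ j j'‖) :
    decayNorm m s Q ≤ decayNorm m s A + decayNorm m s B := by
  rw [decay_eq, decay_eq, decay_eq]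
  refine iSup_le fun j' => ?_
  calc ENNReal.ofReal (jwt j' ^ (-m)) * colNorm s j' Q
      ≤ ENNReal.ofReal (jwt j' ^ (-m)) * (colNorm s j' A + colNorm s j' B) :=
        mul_le_mul_right (colNorm_add_le s j' (fun ℓ j => h ℓ j j')) _
    _ = ENNReal.ofReal (jwt j' ^ (-m)) * colNorm s j' A
        + ENNReal.ofReal (jwt j' ^ (-m)) * colNorm s j' B := by ring
    _ ≤ _ := add_le_add
        (le_iSup (fun j'' => ENNReal.ofReal (jwt j'' ^ (-m)) * colNorm s j'' A) j')
        (le_iSup (fun j'' => ENNReal.ofReal (jwt j'' ^ (-m)) * colNorm s j'' B) j')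

end Hom


namespace Hom
variable {d : ℕ}

lemma dio_lb {Λ : Set (Param d)} {γ τ : ℝ} (hγ : 0 < γ) (hτ : 0 < τ) {lam : Param d}
    (hlam : lam ∈ dioSet Λ γ τ) {ℓ : Zd d} {k : Z2} (hk : ¬(ℓ = 0 ∧ k = 0)) :
    γ / (2 * wt ℓ k) ^ τ ≤ |dotP lam.1 ℓ + dotP lam.2 k| := by
  have h1 := hlam.2 ℓ k hk
  have hpos : 0 < lnorm ℓ + jnorm k := by
    rcases not_and_or.mp hk with h | h
    · have h2 := lnorm_pos h; have h3 := jnorm_nonneg k; linarith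
    · have h2 := jnorm_pos h; have h3 := lnorm_nonneg ℓ; linarith
  have h2 : lnorm ℓ + jnorm k ≤ 2 * wt ℓ k := by
    have ha := lnorm_le_wt ℓ k; have hb := jnorm_le_wt ℓ k; linarith
  have h3 : (lnorm ℓ + jnorm k) ^ τ ≤ (2 * wt ℓ k) ^ τ :=
    Real.rpow_le_rpow hpos.le h2 hτ.le
  have h4 : 0 < (lnorm ℓ + jnorm k) ^ τ := Real.rpow_pos_of_pos hpos τ
  refine le_trans ?_ h1
  gcongr

lemma aux_div {γ τ : ℝ} (hγ : 0 < γ) (hτ : 0 < τ) {w : ℝ} (hw : 1 ≤ w) {a δ' : ℝ}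
    (ha : 0 ≤ a) (hδ : γ / (2 * w) ^ τ ≤ |δ'|) :
    a / |δ'| ≤ (2:ℝ) ^ τ / γ * w ^ τ * a := by
  have hw0 : 0 < w := lt_of_lt_of_le one_pos hw
  have hden : 0 < γ / (2 * w) ^ τ := div_pos hγ (Real.rpow_pos_of_pos (by linarith) τ)
  have hδ0 : 0 < |δ'| := lt_of_lt_of_le hden hδ
  have h2τ : (0:ℝ) < (2:ℝ) ^ τ := Real.rpow_pos_of_pos two_pos τ
  have hwτ : (0:ℝ) < w ^ τ := Real.rpow_pos_of_pos hw0 τ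
  rw [div_le_iff₀ hδ0]
  have hmul : (2:ℝ) ^ τ / γ * w ^ τ * a * (γ / (2 * w) ^ τ) = a := by
    rw [Real.mul_rpow (by norm_num) hw0.le]
    field_simp
  calc a = (2:ℝ) ^ τ / γ * w ^ τ * a * (γ / (2 * w) ^ τ) := hmul.symm
    _ ≤ (2:ℝ) ^ τ / γ * w ^ τ * a * |δ'| := by
        apply mul_le_mul_of_nonneg_left hδ
        positivity

lemma norm_cR (x : ℝ) : ‖cR x‖ = |x| := by
  simp [cR, Complex.norm_real, Real.norm_eq_abs]

lemma psi_norm_le {Λ : Set (Param d)} {γ τ : ℝ} (hγ : 0 < γ) (hτ : 0 < τ) {lam : Param d}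
    (hlam : lam ∈ dioSet Λ γ τ) (R : OpCoef d) (ℓ : Zd d) (j j' : Z2) :
    ‖hPsi lam R ℓ j j'‖ ≤ (2:ℝ) ^ τ / γ * wt ℓ (j - j') ^ τ * ‖R ℓ j j'‖ := by
  have h2τ : (0:ℝ) < (2:ℝ) ^ τ := Real.rpow_pos_of_pos two_pos τ
  have hwτ : (0:ℝ) < wt ℓ (j - j') ^ τ := Real.rpow_pos_of_pos (wt_pos _ _) τ
  unfold hPsi
  by_cases hd : ℓ = 0 ∧ j = j'
  · rw [if_pos hd, norm_zero]
    positivity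
  · rw [if_neg hd]
    have hk : ¬(ℓ = 0 ∧ j - j' = 0) := by
      rintro ⟨ha, hb⟩; exact hd ⟨ha, sub_eq_zero.mp hb⟩
    have hδ := dio_lb hγ hτ hlam hk
    have hnorm : ‖-R ℓ j j' / (Complex.I * cR (dotP lam.1 ℓ + dotP lam.2 (j - j')))‖
        = ‖R ℓ j j'‖ / |dotP lam.1 ℓ + dotP lam.2 (j - j')| := by
      rw [norm_div, norm_neg, norm_mul, Complex.norm_I, one_mul, norm_cR]
    rw [hnorm]
    exact aux_div hγ hτ (one_le_wt _ _) (norm_nonneg _) hδ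

lemma psi_diff_norm_le {Λ : Set (Param d)} {γ τ : ℝ} (hγ : 0 < γ) (hτ : 0 < τ)
    {l1 l2 : Param d} (hl1 : l1 ∈ dioSet Λ γ τ) (hl2 : l2 ∈ dioSet Λ γ τ)
    (R1 R2 : OpCoef d) (ℓ : Zd d) (j j' : Z2) :
    ‖hPsi l1 R1 ℓ j j' - hPsi l2 R2 ℓ j j'‖ ≤
      (2:ℝ) ^ τ / γ * wt ℓ (j - j') ^ τ * ‖R1 ℓ j j' - R2 ℓ j j'‖ +
        (((d:ℝ) + 2) * (4:ℝ) ^ τ / γ ^ 2 * dist l1 l2) * wt ℓ (j - j') ^ (2 * τ + 1)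
          * ‖R2 ℓ j j'‖ := by
  set w := wt ℓ (j - j') with hwdef
  have hw1 : 1 ≤ w := one_le_wt _ _
  have hw0 : 0 < w := wt_pos _ _
  have h2τ : (0:ℝ) < (2:ℝ) ^ τ := Real.rpow_pos_of_pos two_pos τ
  have h4τ : (0:ℝ) < (4:ℝ) ^ τ := Real.rpow_pos_of_pos (by norm_num) τ
  have hwτ : (0:ℝ) < w ^ τ := Real.rpow_pos_of_pos hw0 τ
  have hw21 : (0:ℝ) < w ^ (2 * τ + 1) := Real.rpow_pos_of_pos hw0 _
  have hdist : (0:ℝ) ≤ dist l1 l2 := dist_nonneg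
  have hRHSpos : (0:ℝ) ≤
      (2:ℝ) ^ τ / γ * w ^ τ * ‖R1 ℓ j j' - R2 ℓ j j'‖ +
        (((d:ℝ) + 2) * (4:ℝ) ^ τ / γ ^ 2 * dist l1 l2) * w ^ (2 * τ + 1)
          * ‖R2 ℓ j j'‖ := by positivity
  unfold hPsi
  by_cases hd : ℓ = 0 ∧ j = j'
  · rw [if_pos hd, if_pos hd]
    simpa using hRHSpos
  · rw [if_neg hd, if_neg hd]
    have hk : ¬(ℓ = 0 ∧ j - j' = 0) := by
      rintro ⟨ha, hb⟩; exact hd ⟨ha, sub_eq_zero.mp hb⟩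
    set δ1 := dotP l1.1 ℓ + dotP l1.2 (j - j') with hδ1def
    set δ2 := dotP l2.1 ℓ + dotP l2.2 (j - j') with hδ2def
    have hδ1 := dio_lb hγ hτ hl1 hk
    have hδ2 := dio_lb hγ hτ hl2 hk
    have hden : 0 < γ / (2 * w) ^ τ := div_pos hγ (Real.rpow_pos_of_pos (by linarith) τ)
    have hδ1p : 0 < |δ1| := lt_of_lt_of_le hden hδ1
    have hδ2p : 0 < |δ2| := lt_of_lt_of_le hden hδ2
    have hδ1n : δ1 ≠ 0 := by intro h; rw [h] at hδ1p; simp at hδ1p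
    have hδ2n : δ2 ≠ 0 := by intro h; rw [h] at hδ2p; simp at hδ2p
    set z1 : ℂ := Complex.I * cR δ1 with hz1def
    set z2 : ℂ := Complex.I * cR δ2 with hz2def
    have hz1 : z1 ≠ 0 :=
      mul_ne_zero Complex.I_ne_zero (by simpa [cR] using Complex.ofReal_ne_zero.mpr hδ1n)
    have hz2 : z2 ≠ 0 :=
      mul_ne_zero Complex.I_ne_zero (by simpa [cR] using Complex.ofReal_ne_zero.mpr hδ2n)
    have key : -R1 ℓ j j' / z1 - -R2 ℓ j j' / z2
        = -(R1 ℓ j j' - R2 ℓ j j') / z1 + R2 ℓ j j' * (z1 - z2) / (z1 * z2) := by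
      field_simp
      ring
    rw [key]
    have hzsub : z1 - z2 = Complex.I * cR (δ1 - δ2) := by
      rw [hz1def, hz2def]
      simp only [cR, Complex.ofReal_sub]
      ring
    have hn1 : ‖-(R1 ℓ j j' - R2 ℓ j j') / z1‖ = ‖R1 ℓ j j' - R2 ℓ j j'‖ / |δ1| := by
      rw [norm_div, norm_neg, hz1def, norm_mul, Complex.norm_I, one_mul, norm_cR]
    have hn2 : ‖R2 ℓ j j' * (z1 - z2) / (z1 * z2)‖
        = ‖R2 ℓ j j'‖ * |δ1 - δ2| / (|δ1| * |δ2|) := by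
      have hzz : Complex.I * (δ1:ℂ) - Complex.I * (δ2:ℂ) = Complex.I * ((δ1 - δ2 : ℝ):ℂ) := by
        push_cast
        ring
      simp [hz1def, hz2def, cR, hzz, norm_div, norm_mul, map_div₀, map_mul,
        ← Complex.ofReal_sub]
    have hb1 : ‖-(R1 ℓ j j' - R2 ℓ j j') / z1‖
        ≤ (2:ℝ) ^ τ / γ * w ^ τ * ‖R1 ℓ j j' - R2 ℓ j j'‖ := by
      rw [hn1]
      exact aux_div hγ hτ hw1 (norm_nonneg _) hδ1
    have hb2 : ‖R2 ℓ j j' * (z1 - z2) / (z1 * z2)‖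
        ≤ (((d:ℝ) + 2) * (4:ℝ) ^ τ / γ ^ 2 * dist l1 l2) * w ^ (2 * τ + 1)
          * ‖R2 ℓ j j'‖ := by
      rw [hn2]
      have hdd : |δ1 - δ2| ≤ ((d:ℝ) + 2) * dist l1 l2 * w := dot_sub_le l1 l2 ℓ (j - j')
      have step0 : ‖R2 ℓ j j'‖ * |δ1 - δ2| / (|δ1| * |δ2|)
          = (‖R2 ℓ j j'‖ * |δ1 - δ2| / |δ1|) / |δ2| := by
        rw [div_div]
      have step1 : ‖R2 ℓ j j'‖ * |δ1 - δ2| / |δ1|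
          ≤ (2:ℝ) ^ τ / γ * w ^ τ * (‖R2 ℓ j j'‖ * |δ1 - δ2|) :=
        aux_div hγ hτ hw1 (by positivity) hδ1
      have step2 : (‖R2 ℓ j j'‖ * |δ1 - δ2| / |δ1|) / |δ2|
          ≤ ((2:ℝ) ^ τ / γ * w ^ τ * (‖R2 ℓ j j'‖ * |δ1 - δ2|)) / |δ2| :=
        (div_le_div_iff_of_pos_right hδ2p).mpr step1
      have step3 : ((2:ℝ) ^ τ / γ * w ^ τ * (‖R2 ℓ j j'‖ * |δ1 - δ2|)) / |δ2|
          ≤ (2:ℝ) ^ τ / γ * w ^ τ *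
              ((2:ℝ) ^ τ / γ * w ^ τ * (‖R2 ℓ j j'‖ * |δ1 - δ2|)) :=
        aux_div hγ hτ hw1 (by positivity) hδ2
      have step4 : (2:ℝ) ^ τ / γ * w ^ τ *
              ((2:ℝ) ^ τ / γ * w ^ τ * (‖R2 ℓ j j'‖ * |δ1 - δ2|))
          ≤ (2:ℝ) ^ τ / γ * w ^ τ *
              ((2:ℝ) ^ τ / γ * w ^ τ * (‖R2 ℓ j j'‖ * (((d:ℝ) + 2) * dist l1 l2 * w))) := by
        gcongr
      have heq : (2:ℝ) ^ τ / γ * w ^ τ *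
              ((2:ℝ) ^ τ / γ * w ^ τ * (‖R2 ℓ j j'‖ * (((d:ℝ) + 2) * dist l1 l2 * w)))
          = (((d:ℝ) + 2) * (4:ℝ) ^ τ / γ ^ 2 * dist l1 l2) * w ^ (2 * τ + 1)
              * ‖R2 ℓ j j'‖ := by
        have h4 : (4:ℝ) ^ τ = (2:ℝ) ^ τ * (2:ℝ) ^ τ := by
          rw [show (4:ℝ) = 2 * 2 by norm_num, Real.mul_rpow (by norm_num) (by norm_num)]
        have hwe : w ^ (2 * τ + 1) = w ^ τ * w ^ τ * w := by
          rw [show 2 * τ + 1 = τ + τ + 1 by ring, Real.rpow_add hw0, Real.rpow_add hw0,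
            Real.rpow_one]
        rw [h4, hwe]
        ring
      rw [step0]
      exact le_trans step2 (le_trans step3 (le_trans step4 (le_of_eq heq)))
    calc ‖-(R1 ℓ j j' - R2 ℓ j j') / z1 + R2 ℓ j j' * (z1 - z2) / (z1 * z2)‖
        ≤ ‖-(R1 ℓ j j' - R2 ℓ j j') / z1‖ + ‖R2 ℓ j j' * (z1 - z2) / (z1 * z2)‖ :=
          norm_add_le _ _
      _ ≤ _ := add_le_add hb1 hb2

end Hom

/-- **Homological equation with Diophantine frequencies.** For a Lipschitz
family `R ∈ OPM^m_{s+2τ+1}`, the operator `Ψ` defined above solves, for every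
`λ ∈ Λ(γ,τ)`, the homological equation `ω·∂_φ Ψ + [ζ·∇, Ψ] + R = D_R` (equivalently
`i(ω·ℓ + ζ·(j−j'))Ψ̂(ℓ)_j^{j'} + R̂(ℓ)_j^{j'} = 0` off the diagonal, with `Ψ̂(0)_j^j = 0`),
belongs to `OPM^m_s` with `|Ψ|_{m,s}^{Lip(γ)} ≤ Cγ^{−1}|R|_{m,s+2τ+1}^{Lip(γ)}`, and it
preserves the space of zero-average functions whenever `R` does. -/
theorem homological_equation_diophantine (d : ℕ) (hd : 0 < d)
    (m s τ : ℝ) (hs : s0 d ≤ s) (hτ : 0 < τ) :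
    ∃ C : ℝ, 0 < C ∧
      ∀ (γ : ℝ), 0 < γ → γ ≤ 1 → ∀ (Λ : Set (Param d)) (R : Param d → OpCoef d),
        lipDecay γ m (s + 2 * τ + 1) (dioSet Λ γ τ) R ≠ ⊤ →
        (∀ lam ∈ dioSet Λ γ τ, ∀ (ℓ : Zd d) (j j' : Z2),
          (¬(ℓ = 0 ∧ j = j') →
            Complex.I * cR (dotP lam.1 ℓ + dotP lam.2 (j - j')) * hPsi lam (R lam) ℓ j j'
              + R lam ℓ j j' = 0) ∧
          hPsi lam (R lam) 0 j j = 0) ∧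
        lipDecay γ m s (dioSet Λ γ τ) (fun lam => hPsi lam (R lam)) ≤
          ENNReal.ofReal (C / γ) * lipDecay γ m (s + 2 * τ + 1) (dioSet Λ γ τ) R ∧
        (∀ lam ∈ dioSet Λ γ τ,
          (∀ (ℓ : Zd d) (j' : Z2), j' ≠ 0 → R lam ℓ 0 j' = 0) →
          ∀ (ℓ : Zd d) (j' : Z2), j' ≠ 0 → hPsi lam (R lam) ℓ 0 j' = 0) := by
  classical
  have h2τ : (0:ℝ) < (2:ℝ) ^ τ := Real.rpow_pos_of_pos two_pos τ
  have h4τ : (0:ℝ) < (4:ℝ) ^ τ := Real.rpow_pos_of_pos (by norm_num) τ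
  refine ⟨(2:ℝ) ^ τ + ((d:ℝ) + 2) * (4:ℝ) ^ τ, by positivity, ?_⟩
  set C : ℝ := (2:ℝ) ^ τ + ((d:ℝ) + 2) * (4:ℝ) ^ τ with hCdef
  intro γ hγ hγ1 Λ R _hfin
  set D := dioSet Λ γ τ with hDdef
  have hc1 : (0:ℝ) ≤ (2:ℝ) ^ τ / γ := by positivity
  refine ⟨?_, ?_, ?_⟩
  · -- the homological equation
    intro lam hlam ℓ j j'
    constructor
    · intro hne
      have hk : ¬(ℓ = 0 ∧ j - j' = 0) := by
        rintro ⟨ha, hb⟩; exact hne ⟨ha, sub_eq_zero.mp hb⟩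
      have hδ := Hom.dio_lb hγ hτ hlam hk
      have hden : 0 < γ / (2 * wt ℓ (j - j')) ^ τ :=
        div_pos hγ (Real.rpow_pos_of_pos (by have := Hom.wt_pos ℓ (j - j'); linarith) τ)
      have hδp : 0 < |dotP lam.1 ℓ + dotP lam.2 (j - j')| := lt_of_lt_of_le hden hδ
      have hδn : dotP lam.1 ℓ + dotP lam.2 (j - j') ≠ 0 := by
        intro h; rw [h] at hδp; simp at hδp
      have hz : Complex.I * cR (dotP lam.1 ℓ + dotP lam.2 (j - j')) ≠ 0 :=
        mul_ne_zero Complex.I_ne_zero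
          (by simpa [cR] using Complex.ofReal_ne_zero.mpr hδn)
      simp only [hPsi, if_neg hne]
      field_simp
      rw [div_self (by simpa [cR] using Complex.ofReal_ne_zero.mpr hδn), neg_add_cancel,
        mul_zero]
    · simp [hPsi]
  · -- the estimate
    set s' := s + 2 * τ + 1 with hs'def
    -- sup part bound
    have hsup : ∀ lam ∈ D, decayNorm m s (hPsi lam (R lam)) ≤
        ENNReal.ofReal ((2:ℝ) ^ τ / γ) * decayNorm m s' (R lam) := by
      intro lam hlam
      calc decayNorm m s (hPsi lam (R lam))
          ≤ ENNReal.ofReal ((2:ℝ) ^ τ / γ) * decayNorm m (s + τ) (R lam) :=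
            Hom.decay_le_of_le hc1 m s
              (fun ℓ j j' => Hom.psi_norm_le hγ hτ hlam (R lam) ℓ j j')
        _ ≤ _ := mul_le_mul_right (Hom.decay_mono m (by rw [hs'def]; linarith)) _
    set SupR := ⨆ lam ∈ D, decayNorm m s' (R lam) with hSupR
    set LipR := ⨆ (l1 : D) (l2 : D) (_ : l1 ≠ l2),
        decayNorm m (s' - 1) (opSub (R ↑l1) (R ↑l2)) / edist (l1 : Param d) (l2 : Param d)
      with hLipR
    have hSupPsi : (⨆ lam ∈ D, decayNorm m s (hPsi lam (R lam)))
        ≤ ENNReal.ofReal ((2:ℝ) ^ τ / γ) * SupR := by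
      refine iSup₂_le fun lam hlam => ?_
      refine le_trans (hsup lam hlam) (mul_le_mul_right ?_ _)
      exact le_iSup₂ (f := fun lam (_ : lam ∈ D) => decayNorm m s' (R lam)) lam hlam
    set K : ℝ := ((d:ℝ) + 2) * (4:ℝ) ^ τ / γ ^ 2 with hKdef
    have hK : (0:ℝ) ≤ K := by positivity
    -- Lipschitz part bound
    have hLipterm : ∀ (l1 l2 : D), l1 ≠ l2 →
        decayNorm m (s - 1) (opSub (hPsi (↑l1) (R ↑l1)) (hPsi (↑l2) (R ↑l2)))
            / edist (l1 : Param d) (l2 : Param d)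
          ≤ ENNReal.ofReal ((2:ℝ) ^ τ / γ) *
              (decayNorm m (s' - 1) (opSub (R ↑l1) (R ↑l2))
                / edist (l1 : Param d) (l2 : Param d))
            + ENNReal.ofReal K * SupR := by
      intro l1 l2 hne
      have hco : (l1 : Param d) ≠ (l2 : Param d) := Subtype.coe_injective.ne hne
      have he0 : edist (l1 : Param d) (l2 : Param d) ≠ 0 := by
        simpa using (edist_pos.mpr hco).ne'
      have hetop : edist (l1 : Param d) (l2 : Param d) ≠ ⊤ := edist_ne_top _ _
      set A : OpCoef d := fun ℓ j j'' =>
        (((2:ℝ) ^ τ / γ * wt ℓ (j - j'') ^ τ * ‖R (↑l1) ℓ j j'' - R (↑l2) ℓ j j''‖ : ℝ) : ℂ)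
        with hAdef
      set B : OpCoef d := fun ℓ j j'' =>
        (((K * dist (l1 : Param d) (l2 : Param d)) * wt ℓ (j - j'') ^ (2 * τ + 1)
            * ‖R (↑l2) ℓ j j''‖ : ℝ) : ℂ) with hBdef
      have hnA : ∀ ℓ j j'', ‖A ℓ j j''‖
          = (2:ℝ) ^ τ / γ * wt ℓ (j - j'') ^ τ * ‖R (↑l1) ℓ j j'' - R (↑l2) ℓ j j''‖ := by
        intro ℓ j j''
        have hwτ : (0:ℝ) ≤ wt ℓ (j - j'') ^ τ :=
          (Real.rpow_pos_of_pos (Hom.wt_pos _ _) τ).le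
        rw [hAdef]
        simp only [Complex.norm_real, Real.norm_eq_abs]
        exact abs_of_nonneg (by positivity)
      have hnB : ∀ ℓ j j'', ‖B ℓ j j''‖
          = (K * dist (l1 : Param d) (l2 : Param d)) * wt ℓ (j - j'') ^ (2 * τ + 1)
              * ‖R (↑l2) ℓ j j''‖ := by
        intro ℓ j j''
        have hwτ : (0:ℝ) ≤ wt ℓ (j - j'') ^ (2 * τ + 1) :=
          (Real.rpow_pos_of_pos (Hom.wt_pos _ _) _).le
        have hdist : (0:ℝ) ≤ dist (l1 : Param d) (l2 : Param d) := dist_nonneg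
        rw [hBdef]
        simp only [Complex.norm_real, Real.norm_eq_abs]
        exact abs_of_nonneg (by positivity)
      have hAB : ∀ ℓ j j'',
          ‖opSub (hPsi (↑l1) (R ↑l1)) (hPsi (↑l2) (R ↑l2)) ℓ j j''‖
            ≤ ‖A ℓ j j''‖ + ‖B ℓ j j''‖ := by
        intro ℓ j j''
        rw [hnA, hnB]
        have := Hom.psi_diff_norm_le hγ hτ l1.2 l2.2 (R ↑l1) (R ↑l2) ℓ j j''
        calc ‖opSub (hPsi (↑l1) (R ↑l1)) (hPsi (↑l2) (R ↑l2)) ℓ j j''‖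
            = ‖hPsi (↑l1) (R ↑l1) ℓ j j'' - hPsi (↑l2) (R ↑l2) ℓ j j''‖ := rfl
          _ ≤ _ := by
              refine le_trans this (le_of_eq ?_)
              ring
      have hdecA : decayNorm m (s - 1) A
          ≤ ENNReal.ofReal ((2:ℝ) ^ τ / γ) * decayNorm m (s' - 1) (opSub (R ↑l1) (R ↑l2)) := by
        refine le_trans (Hom.decay_le_of_le hc1 m (s - 1)
          (fun ℓ j j'' => le_of_eq (hnA ℓ j j''))) ?_
        exact mul_le_mul_right (Hom.decay_mono m (by rw [hs'def]; linarith)) _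
      have hdecB : decayNorm m (s - 1) B
          ≤ ENNReal.ofReal (K * dist (l1 : Param d) (l2 : Param d))
              * decayNorm m s' (R ↑l2) := by
        refine le_trans (Hom.decay_le_of_le
          (by positivity : (0:ℝ) ≤ K * dist (l1 : Param d) (l2 : Param d)) m (s - 1)
          (fun ℓ j j'' => le_of_eq (hnB ℓ j j''))) ?_
        exact mul_le_mul_right (Hom.decay_mono m (by rw [hs'def]; linarith)) _
      have hsplit : decayNorm m (s - 1)
            (opSub (hPsi (↑l1) (R ↑l1)) (hPsi (↑l2) (R ↑l2)))
          ≤ ENNReal.ofReal ((2:ℝ) ^ τ / γ) * decayNorm m (s' - 1) (opSub (R ↑l1) (R ↑l2))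
            + ENNReal.ofReal (K * dist (l1 : Param d) (l2 : Param d))
              * decayNorm m s' (R ↑l2) :=
        le_trans (Hom.decay_add_le m (s - 1) hAB) (add_le_add hdecA hdecB)
      calc decayNorm m (s - 1) (opSub (hPsi (↑l1) (R ↑l1)) (hPsi (↑l2) (R ↑l2)))
              / edist (l1 : Param d) (l2 : Param d)
          ≤ (ENNReal.ofReal ((2:ℝ) ^ τ / γ) * decayNorm m (s' - 1) (opSub (R ↑l1) (R ↑l2))
              + ENNReal.ofReal (K * dist (l1 : Param d) (l2 : Param d))
                * decayNorm m s' (R ↑l2)) / edist (l1 : Param d) (l2 : Param d) :=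
            ENNReal.div_le_div_right hsplit _
        _ = ENNReal.ofReal ((2:ℝ) ^ τ / γ) *
              (decayNorm m (s' - 1) (opSub (R ↑l1) (R ↑l2))
                / edist (l1 : Param d) (l2 : Param d))
            + ENNReal.ofReal (K * dist (l1 : Param d) (l2 : Param d))
                * decayNorm m s' (R ↑l2) / edist (l1 : Param d) (l2 : Param d) := by
            simp only [ENNReal.add_div, div_eq_mul_inv, mul_assoc]
            ring
        _ ≤ ENNReal.ofReal ((2:ℝ) ^ τ / γ) *
              (decayNorm m (s' - 1) (opSub (R ↑l1) (R ↑l2))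
                / edist (l1 : Param d) (l2 : Param d))
            + ENNReal.ofReal K * SupR := by
            refine add_le_add_right ?_ _
            have heq : ENNReal.ofReal (K * dist (l1 : Param d) (l2 : Param d))
                = ENNReal.ofReal K * edist (l1 : Param d) (l2 : Param d) := by
              rw [ENNReal.ofReal_mul hK, edist_dist]
            rw [heq]
            have hcancel : ENNReal.ofReal K * edist (l1 : Param d) (l2 : Param d)
                  * decayNorm m s' (R ↑l2) / edist (l1 : Param d) (l2 : Param d)
                = ENNReal.ofReal K * decayNorm m s' (R ↑l2) := by
              rw [div_eq_mul_inv]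
              calc ENNReal.ofReal K * edist (l1 : Param d) (l2 : Param d)
                    * decayNorm m s' (R ↑l2) * (edist (l1 : Param d) (l2 : Param d))⁻¹
                  = ENNReal.ofReal K * decayNorm m s' (R ↑l2) *
                      (edist (l1 : Param d) (l2 : Param d)
                        * (edist (l1 : Param d) (l2 : Param d))⁻¹) := by ring
                _ = _ := by rw [ENNReal.mul_inv_cancel he0 hetop, mul_one]
            rw [hcancel]
            refine mul_le_mul_right ?_ _
            exact le_iSup₂ (f := fun lam (_ : lam ∈ D) => decayNorm m s' (R lam)) (↑l2) l2.2
    have hLipPsi : (⨆ (l1 : D) (l2 : D) (_ : l1 ≠ l2),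
          decayNorm m (s - 1) (opSub (hPsi (↑l1) (R ↑l1)) (hPsi (↑l2) (R ↑l2)))
            / edist (l1 : Param d) (l2 : Param d))
        ≤ ENNReal.ofReal ((2:ℝ) ^ τ / γ) * LipR + ENNReal.ofReal K * SupR := by
      refine iSup_le fun l1 => iSup_le fun l2 => iSup_le fun hne => ?_
      refine le_trans (hLipterm l1 l2 hne) (add_le_add_left (mul_le_mul_right ?_ _) _)
      refine le_iSup_of_le l1 (le_iSup_of_le l2 (le_iSup_of_le hne le_rfl))
    -- put it together
    have hofadd : ENNReal.ofReal ((2:ℝ) ^ τ / γ) + ENNReal.ofReal (γ * K)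
        = ENNReal.ofReal (C / γ) := by
      rw [← ENNReal.ofReal_add (by positivity) (by positivity)]
      congr 1
      rw [hKdef, hCdef]
      field_simp
    have hc1C : ENNReal.ofReal ((2:ℝ) ^ τ / γ) ≤ ENNReal.ofReal (C / γ) := by
      apply ENNReal.ofReal_le_ofReal
      have hCge : (2:ℝ) ^ τ ≤ C := by
        rw [hCdef]
        have : (0:ℝ) ≤ ((d:ℝ) + 2) * (4:ℝ) ^ τ := by positivity
        linarith
      exact (div_le_div_iff_of_pos_right hγ).mpr hCge
    show (⨆ lam ∈ D, decayNorm m s (hPsi lam (R lam))) + ENNReal.ofReal γ *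
        (⨆ (l1 : D) (l2 : D) (_ : l1 ≠ l2),
          decayNorm m (s - 1) (opSub (hPsi (↑l1) (R ↑l1)) (hPsi (↑l2) (R ↑l2)))
            / edist (l1 : Param d) (l2 : Param d))
      ≤ ENNReal.ofReal (C / γ) * (SupR + ENNReal.ofReal γ * LipR)
    calc (⨆ lam ∈ D, decayNorm m s (hPsi lam (R lam))) + ENNReal.ofReal γ *
        (⨆ (l1 : D) (l2 : D) (_ : l1 ≠ l2),
          decayNorm m (s - 1) (opSub (hPsi (↑l1) (R ↑l1)) (hPsi (↑l2) (R ↑l2)))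
            / edist (l1 : Param d) (l2 : Param d))
        ≤ ENNReal.ofReal ((2:ℝ) ^ τ / γ) * SupR + ENNReal.ofReal γ *
            (ENNReal.ofReal ((2:ℝ) ^ τ / γ) * LipR + ENNReal.ofReal K * SupR) :=
          add_le_add hSupPsi (mul_le_mul_right hLipPsi _)
      _ = (ENNReal.ofReal ((2:ℝ) ^ τ / γ) + ENNReal.ofReal γ * ENNReal.ofReal K) * SupR
            + ENNReal.ofReal ((2:ℝ) ^ τ / γ) * (ENNReal.ofReal γ * LipR) := by ring
      _ = ENNReal.ofReal (C / γ) * SupR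
            + ENNReal.ofReal ((2:ℝ) ^ τ / γ) * (ENNReal.ofReal γ * LipR) := by
          rw [← ENNReal.ofReal_mul hγ.le, hofadd]
      _ ≤ ENNReal.ofReal (C / γ) * SupR
            + ENNReal.ofReal (C / γ) * (ENNReal.ofReal γ * LipR) :=
          add_le_add_right (mul_le_mul_left hc1C _) _
      _ = ENNReal.ofReal (C / γ) * (SupR + ENNReal.ofReal γ * LipR) := by ring
  · -- zero average
    intro lam hlam hR ℓ j' hj'
    have hne : ¬(ℓ = 0 ∧ (0:Z2) = j') := by
      rintro ⟨_, h⟩; exact hj' h.symm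
    simp [hPsi, hne, hR ℓ j' hj']

end
end

section
/- (Homological equation in the KAM reducibility step) Let γ ∈ (0,1), τ > 0, N > 0, let M be an integer with M > 4τ, and let s ≥ s₀. Let ζ ∈ ℝ², ω ∈ ℝ^d, and μ(j) = i ζ·j + q(j) with q(j) purely imaginary for every j ∈ ℤ²∖{0}, and assume the second Melnikov conditions: |i ω·ℓ + μ(j) − μ(j')| ≥ γ/(⟨ℓ⟩^τ |j|^τ |j'|^τ) for all ℓ ∈ ℤ^d, j,j' ∈ ℤ²∖{0} with (ℓ,j,j') ≠ (0,j,j) and |ℓ|, |j−j'| ≤ N. Let R be an operator with |R|_{−M,s} < ∞, and define Ψ by Ψ̂(ℓ)_j^{j'} := −R̂(ℓ)_j^{j'}/(i ω·ℓ + μ(j) − μ(j')) for (ℓ,j,j') ≠ (0,j,j) with |ℓ|,|j−j'| ≤ N, and Ψ̂(ℓ)_j^{j'} := 0 otherwise. Then Ψ solves ω·∂_φ Ψ + [D, Ψ] + Π_N R = D_R, where D := diag_{j∈ℤ²∖{0}} μ(j), and satisfies |Ψ|_{0,s} ≤ C(s,τ) N^{2τ} γ^{−1} |R|_{−M,s}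 and |Ψ|_{0,s+M} ≤ C(s,τ) N^{2τ+M} γ^{−1} |R|_{−M,s}. -/
open scoped BigOperators ENNReal
open MeasureTheory Filter

noncomputable section

/-- The (purely imaginary) diagonal eigenvalues `μ(j) = iζ·j + q(j)`. -/
def muF (ζ : Fin 2 → ℝ) (q : Z2 → ℂ) (j : Z2) : ℂ := Complex.I * cR (dotP ζ j) + q j

/-- The solution `Ψ` of the homological equation of the KAM reducibility step:
`Ψ̂(ℓ)_j^{j'} = −R̂(ℓ)_j^{j'}/(iω·ℓ + μ(j) − μ(j'))` for `(ℓ,j,j') ≠ (0,j,j)` with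
`|ℓ|, |j−j'| ≤ N`, and `0` otherwise. -/
def kamPsi {d : ℕ} (N : ℝ) (ω : Fin d → ℝ) (ζ : Fin 2 → ℝ) (q : Z2 → ℂ)
    (R : OpCoef d) : OpCoef d :=
  fun ℓ j j' =>
    if (¬(ℓ = 0 ∧ j = j')) ∧ lnorm ℓ ≤ N ∧ jnorm (j - j') ≤ N then
      - R ℓ j j' / (Complex.I * cR (dotP ω ℓ) + muF ζ q j - muF ζ q j')
    else 0

/-! ### Auxiliary lemmas -/

lemma lnorm_nonneg {d : ℕ} (ℓ : Zd d) : 0 ≤ lnorm ℓ := Real.sqrt_nonneg _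

lemma jnorm_nonneg (j : Z2) : 0 ≤ jnorm j := Real.sqrt_nonneg _

lemma sq_int_ge_one {n : ℤ} (h : n ≠ 0) : (1:ℝ) ≤ (n:ℝ)^2 := by
  have h' : (1:ℤ) ≤ n^2 := by rcases lt_or_gt_of_ne h with h'|h' <;> nlinarith
  exact_mod_cast h'

lemma one_le_lnorm {d : ℕ} {ℓ : Zd d} (h : ℓ ≠ 0) : 1 ≤ lnorm ℓ := by
  obtain ⟨i, hi⟩ := Function.ne_iff.mp h
  have hi' : ℓ i ≠ 0 := by simpa using hi
  have h2 : ((ℓ i:ℝ))^2 ≤ ∑ k, ((ℓ k:ℝ))^2 :=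
    Finset.single_le_sum (f := fun k => ((ℓ k:ℝ))^2) (fun k _ => sq_nonneg _) (Finset.mem_univ i)
  have h3 : (1:ℝ) ≤ ∑ k, ((ℓ k:ℝ))^2 := le_trans (sq_int_ge_one hi') h2
  calc (1:ℝ) = Real.sqrt 1 := Real.sqrt_one.symm
    _ ≤ lnorm ℓ := Real.sqrt_le_sqrt h3

lemma one_le_jnorm {j : Z2} (h : j ≠ 0) : 1 ≤ jnorm j := by
  have hor : j 0 ≠ 0 ∨ j 1 ≠ 0 := by
    by_contra hc
    push_neg at hc
    exact h (funext fun i => by fin_cases i <;> simp [hc.1, hc.2])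
  have h3 : (1:ℝ) ≤ ((j 0:ℝ))^2 + ((j 1:ℝ))^2 := by
    rcases hor with h'|h'
    · nlinarith [sq_int_ge_one h', sq_nonneg ((j 1:ℝ))]
    · nlinarith [sq_int_ge_one h', sq_nonneg ((j 0:ℝ))]
  calc (1:ℝ) = Real.sqrt 1 := Real.sqrt_one.symm
    _ ≤ jnorm j := Real.sqrt_le_sqrt h3

lemma lnorm_zero' {d : ℕ} : lnorm (0 : Zd d) = 0 := by
  simp [lnorm]

lemma jnorm_zero' : jnorm (0 : Z2) = 0 := by
  simp [jnorm]

/-- `ℤ² → ℂ` auxiliary embedding. -/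
def toC (j : Z2) : ℂ := ⟨(j 0 : ℝ), (j 1 : ℝ)⟩

lemma jnorm_eq_abs (j : Z2) : jnorm j = ‖toC j‖ := by
  rw [Complex.norm_def, Complex.normSq_mk]
  unfold jnorm toC
  congr 1
  ring

lemma jnorm_triangle (j j' : Z2) : jnorm j ≤ jnorm j' + jnorm (j - j') := by
  have h : toC j = toC j' + toC (j - j') := by
    unfold toC
    apply Complex.ext <;> simp <;> push_cast <;> ring
  rw [jnorm_eq_abs, jnorm_eq_abs, jnorm_eq_abs, h]
  exact norm_add_le _ _

/-- Pointwise weighted bound on the coefficients of `Ψ`. -/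
lemma psi_pointwise {d : ℕ} (τ s t γ N : ℝ) (M : ℕ)
    (hτ : 0 < τ) (ht : 0 ≤ t) (h2τM : 2 * τ ≤ (M : ℝ)) (hγ : 0 < γ) (hN : 0 < N)
    (ω : Fin d → ℝ) (ζ : Fin 2 → ℝ) (q : Z2 → ℂ)
    (hmel : ∀ (ℓ : Zd d) (j j' : Z2), j ≠ 0 → j' ≠ 0 → ¬(ℓ = 0 ∧ j = j') →
      lnorm ℓ ≤ N → jnorm (j - j') ≤ N →
      γ / (lwt ℓ ^ τ * jnorm j ^ τ * jnorm j' ^ τ) ≤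
        ‖Complex.I * cR (dotP ω ℓ) + muF ζ q j - muF ζ q j'‖)
    (R : OpCoef d) (hR0 : ∀ (ℓ : Zd d) (j j' : Z2), j = 0 ∨ j' = 0 → R ℓ j j' = 0)
    (ℓ : Zd d) (j j' : Z2) :
    wt ℓ (j - j') ^ (2*(s+t)) * ‖kamPsi N ω ζ q R ℓ j j'‖^2 ≤
      ((2:ℝ)^τ * N^(2*τ+t) / γ * jwt j' ^ (M:ℝ))^2 *
        (wt ℓ (j - j') ^ (2*s) * ‖R ℓ j j'‖^2) := by
  have hwt1 : (1:ℝ) ≤ wt ℓ (j - j') := le_max_left _ _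
  have hwt0 : (0:ℝ) < wt ℓ (j - j') := lt_of_lt_of_le one_pos hwt1
  have hjw1 : (1:ℝ) ≤ jwt j' := le_max_left _ _
  have hjw0 : (0:ℝ) < jwt j' := lt_of_lt_of_le one_pos hjw1
  have hrhs0 : (0:ℝ) ≤ ((2:ℝ)^τ * N^(2*τ+t) / γ * jwt j' ^ (M:ℝ))^2 *
      (wt ℓ (j - j') ^ (2*s) * ‖R ℓ j j'‖^2) :=
    mul_nonneg (sq_nonneg _) (mul_nonneg (Real.rpow_nonneg hwt0.le _) (sq_nonneg _))
  unfold kamPsi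
  split_ifs with hc
  swap
  · simpa [norm_zero] using hrhs0
  obtain ⟨hA, hBl, hBj⟩ := hc
  by_cases hj : j = 0
  · rw [hR0 ℓ j j' (Or.inl hj)]
    simpa [norm_zero] using hrhs0
  by_cases hj' : j' = 0
  · rw [hR0 ℓ j j' (Or.inr hj')]
    simpa [norm_zero] using hrhs0
  have hj1 : 1 ≤ jnorm j := one_le_jnorm hj
  have hj'1 : 1 ≤ jnorm j' := one_le_jnorm hj'
  have hN1 : (1:ℝ) ≤ N := by
    by_contra hlt
    push_neg at hlt
    have hℓ : ℓ = 0 := by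
      by_contra h
      exact absurd (le_trans (one_le_lnorm h) hBl) (not_le.mpr hlt)
    have hjj : j = j' := by
      by_contra h
      exact absurd (le_trans (one_le_jnorm (sub_ne_zero.mpr h)) hBj) (not_le.mpr hlt)
    exact hA ⟨hℓ, hjj⟩
  set δ := Complex.I * cR (dotP ω ℓ) + muF ζ q j - muF ζ q j' with hδdef
  set D := lwt ℓ ^ τ * jnorm j ^ τ * jnorm j' ^ τ with hD
  have hlwt0 : (0:ℝ) < lwt ℓ := lt_of_lt_of_le one_pos (le_max_left _ _)
  have hD0 : (0:ℝ) < D := by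
    exact mul_pos (mul_pos (Real.rpow_pos_of_pos hlwt0 τ)
      (Real.rpow_pos_of_pos (lt_of_lt_of_le one_pos hj1) τ))
      (Real.rpow_pos_of_pos (lt_of_lt_of_le one_pos hj'1) τ)
  have hmel' := hmel ℓ j j' hj hj' hA hBl hBj
  have hδpos : 0 < ‖δ‖ := lt_of_lt_of_le (div_pos hγ hD0) hmel'
  -- bound on D
  have hlwtN : lwt ℓ ≤ N := max_le hN1 hBl
  have hj'w : jnorm j' ≤ jwt j' := le_max_right _ _
  have hjN : jnorm j ≤ 2 * N * jwt j' := by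
    have htri := jnorm_triangle j j'
    nlinarith [hjw1, hN1, hj'w]
  set K := (2:ℝ)^τ * N^(2*τ) * jwt j' ^ (M:ℝ) with hKdef
  have hK : D ≤ K := by
    have e1 : lwt ℓ ^ τ ≤ N ^ τ := Real.rpow_le_rpow hlwt0.le hlwtN hτ.le
    have e2 : jnorm j ^ τ ≤ (2*N*jwt j') ^ τ :=
      Real.rpow_le_rpow (jnorm_nonneg j) hjN hτ.le
    have e3 : jnorm j' ^ τ ≤ jwt j' ^ τ :=
      Real.rpow_le_rpow (jnorm_nonneg j') hj'w hτ.le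
    have step1 : D ≤ N^τ * (2*N*jwt j')^τ * jwt j'^τ := by
      apply mul_le_mul _ e3 (Real.rpow_nonneg (jnorm_nonneg j') τ)
        (mul_nonneg (Real.rpow_nonneg hN.le τ) (Real.rpow_nonneg (by positivity) τ))
      exact mul_le_mul e1 e2 (Real.rpow_nonneg (jnorm_nonneg j) τ)
        (Real.rpow_nonneg hN.le τ)
    have step2 : N^τ * (2*N*jwt j')^τ * jwt j'^τ = 2^τ * (N^τ * N^τ) * (jwt j'^τ * jwt j'^τ) := by
      rw [Real.mul_rpow (by positivity) hjw0.le, Real.mul_rpow (by norm_num) hN.le]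
      ring
    have step3 : (2:ℝ)^τ * (N^τ * N^τ) * (jwt j'^τ * jwt j'^τ)
        = 2^τ * N^(2*τ) * jwt j'^(2*τ) := by
      rw [← Real.rpow_add hN, ← Real.rpow_add hjw0, two_mul]
    have step4 : (2:ℝ)^τ * N^(2*τ) * jwt j'^(2*τ) ≤ K := by
      rw [hKdef]
      apply mul_le_mul_of_nonneg_left (Real.rpow_le_rpow_of_exponent_le hjw1 h2τM)
      exact mul_nonneg (Real.rpow_nonneg (by norm_num) τ) (Real.rpow_nonneg hN.le _)
    calc D ≤ N^τ * (2*N*jwt j')^τ * jwt j'^τ := step1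
      _ = 2^τ * (N^τ * N^τ) * (jwt j'^τ * jwt j'^τ) := step2
      _ = 2^τ * N^(2*τ) * jwt j'^(2*τ) := step3
      _ ≤ K := step4
  set A := ‖R ℓ j j'‖ * K / γ with hAdef
  have hψ : ‖-R ℓ j j' / δ‖ ≤ A := by
    rw [norm_div, norm_neg]
    have hstep : ‖R ℓ j j'‖ / ‖δ‖ ≤ ‖R ℓ j j'‖ * D / γ := by
      rw [div_le_iff₀ hδpos]
      calc ‖R ℓ j j'‖ = (‖R ℓ j j'‖ * D / γ) * (γ / D) := by
            field_simp
        _ ≤ (‖R ℓ j j'‖ * D / γ) * ‖δ‖ := by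
            apply mul_le_mul_of_nonneg_left hmel'
            exact div_nonneg (mul_nonneg (norm_nonneg _) hD0.le) hγ.le
    refine le_trans hstep ?_
    rw [hAdef]
    exact (div_le_div_iff_of_pos_right hγ).mpr (mul_le_mul_of_nonneg_left hK (norm_nonneg _))
  have h1 : ‖-R ℓ j j' / δ‖^2 ≤ A^2 := by
    have hA0 : 0 ≤ A := le_trans (norm_nonneg _) hψ
    nlinarith [norm_nonneg (-R ℓ j j' / δ)]
  have hwtN : wt ℓ (j - j') ≤ N := max_le hN1 (max_le hBl hBj)
  have h3 : wt ℓ (j - j') ^ (2*t) ≤ N ^ (2*t) :=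
    Real.rpow_le_rpow hwt0.le hwtN (by linarith)
  have hNt : N^(2*τ+t) = N^(2*τ) * N^t := Real.rpow_add hN _ _
  have hN2t : N^(2*t) = (N^t)^2 := by
    rw [sq, ← Real.rpow_add hN, two_mul]
  calc wt ℓ (j-j') ^ (2*(s+t)) * ‖-R ℓ j j' / δ‖^2
      = wt ℓ (j-j')^(2*s) * wt ℓ (j-j')^(2*t) * ‖-R ℓ j j' / δ‖^2 := by
        rw [mul_add, Real.rpow_add hwt0]
    _ ≤ wt ℓ (j-j')^(2*s) * N^(2*t) * A^2 := by
        apply mul_le_mul _ h1 (sq_nonneg _)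
          (mul_nonneg (Real.rpow_nonneg hwt0.le _) (Real.rpow_nonneg hN.le _))
        exact mul_le_mul_of_nonneg_left h3 (Real.rpow_nonneg hwt0.le _)
    _ = ((2:ℝ)^τ * N^(2*τ+t) / γ * jwt j' ^ (M:ℝ))^2 *
        (wt ℓ (j - j') ^ (2*s) * ‖R ℓ j j'‖^2) := by
        rw [hNt, hN2t, hAdef, hKdef]
        ring

lemma tsum_sqrt_le {d : ℕ} {a b : Freq d → ℝ≥0∞} {c : ℝ≥0∞}
    (h : ∀ p, a p ≤ c ^ 2 * b p) :
    (∑' p, a p) ^ ((1:ℝ)/2) ≤ c * (∑' p, b p) ^ ((1:ℝ)/2) := by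
  have h1 : (∑' p, a p) ≤ c^2 * ∑' p, b p := by
    rw [← ENNReal.tsum_mul_left]
    exact ENNReal.tsum_le_tsum h
  calc (∑' p, a p) ^ ((1:ℝ)/2) ≤ (c^2 * ∑' p, b p) ^ ((1:ℝ)/2) :=
        ENNReal.rpow_le_rpow h1 (by norm_num)
    _ = c * (∑' p, b p) ^ ((1:ℝ)/2) := by
        rw [ENNReal.mul_rpow_of_nonneg _ _ (by norm_num : (0:ℝ) ≤ 1/2)]
        congr 1
        rw [← ENNReal.rpow_natCast c 2, ← ENNReal.rpow_mul]
        norm_num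

/-- The decay-norm bound on `Ψ`, with smoothing loss `t ≥ 0`. -/
lemma kamPsi_decay_bound {d : ℕ} (τ s t γ N : ℝ) (M : ℕ)
    (hτ : 0 < τ) (ht : 0 ≤ t) (h2τM : 2 * τ ≤ (M : ℝ)) (hγ : 0 < γ) (hN : 0 < N)
    (ω : Fin d → ℝ) (ζ : Fin 2 → ℝ) (q : Z2 → ℂ)
    (hmel : ∀ (ℓ : Zd d) (j j' : Z2), j ≠ 0 → j' ≠ 0 → ¬(ℓ = 0 ∧ j = j') →
      lnorm ℓ ≤ N → jnorm (j - j') ≤ N →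
      γ / (lwt ℓ ^ τ * jnorm j ^ τ * jnorm j' ^ τ) ≤
        ‖Complex.I * cR (dotP ω ℓ) + muF ζ q j - muF ζ q j'‖)
    (R : OpCoef d) (hR0 : ∀ (ℓ : Zd d) (j j' : Z2), j = 0 ∨ j' = 0 → R ℓ j j' = 0) :
    decayNorm 0 (s + t) (kamPsi N ω ζ q R) ≤
      ENNReal.ofReal ((2:ℝ)^τ * N^(2*τ+t) / γ) * decayNorm (-(M:ℝ)) s R := by
  set Ψ := kamPsi N ω ζ q R with hΨ
  have hCnn : (0:ℝ) ≤ (2:ℝ)^τ * N^(2*τ+t) / γ :=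
    div_nonneg (mul_nonneg (Real.rpow_nonneg (by norm_num) _) (Real.rpow_nonneg hN.le _)) hγ.le
  rw [decayNorm]
  apply iSup_le
  intro j'
  rw [neg_zero, Real.rpow_zero, ENNReal.ofReal_one, one_mul]
  have hjwnn : (0:ℝ) ≤ jwt j' ^ (M:ℝ) :=
    Real.rpow_nonneg (le_trans zero_le_one (le_max_left _ _)) _
  set c : ℝ≥0∞ := ENNReal.ofReal (((2:ℝ)^τ * N^(2*τ+t) / γ) * jwt j' ^ (M:ℝ)) with hc
  have hpt : ∀ p : Freq d,
      ENNReal.ofReal (wt p.1 (p.2 - j') ^ (2 * (s + t))) * (‖Ψ p.1 p.2 j'‖₊ : ℝ≥0∞)^2 ≤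
        c^2 * (ENNReal.ofReal (wt p.1 (p.2 - j') ^ (2 * s)) * (‖R p.1 p.2 j'‖₊ : ℝ≥0∞)^2) := by
    intro p
    have hwnn : (0:ℝ) ≤ wt p.1 (p.2 - j') ^ (2*(s+t)) :=
      Real.rpow_nonneg (le_trans zero_le_one (le_max_left _ _)) _
    have hwnn' : (0:ℝ) ≤ wt p.1 (p.2 - j') ^ (2*s) :=
      Real.rpow_nonneg (le_trans zero_le_one (le_max_left _ _)) _
    have key := psi_pointwise τ s t γ N M hτ ht h2τM hγ hN ω ζ q hmel R hR0 p.1 p.2 j'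
    calc ENNReal.ofReal (wt p.1 (p.2 - j') ^ (2*(s+t))) * (‖Ψ p.1 p.2 j'‖₊ : ℝ≥0∞)^2
        = ENNReal.ofReal (wt p.1 (p.2 - j') ^ (2*(s+t)) * ‖Ψ p.1 p.2 j'‖^2) := by
          rw [← enorm_eq_nnnorm, ← ofReal_norm, ← ENNReal.ofReal_pow (norm_nonneg _),
            ← ENNReal.ofReal_mul hwnn]
      _ ≤ ENNReal.ofReal (((2:ℝ)^τ * N^(2*τ+t) / γ * jwt j' ^ (M:ℝ))^2 *
            (wt p.1 (p.2 - j') ^ (2*s) * ‖R p.1 p.2 j'‖^2)) := ENNReal.ofReal_le_ofReal key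
      _ = c^2 * (ENNReal.ofReal (wt p.1 (p.2 - j') ^ (2*s)) * (‖R p.1 p.2 j'‖₊ : ℝ≥0∞)^2) := by
          rw [hc, ENNReal.ofReal_mul (sq_nonneg ((2:ℝ)^τ * N^(2*τ+t) / γ * jwt j' ^ (M:ℝ))),
            ENNReal.ofReal_pow (mul_nonneg hCnn hjwnn),
            ENNReal.ofReal_mul hwnn', ENNReal.ofReal_pow (norm_nonneg _),
            ofReal_norm, enorm_eq_nnnorm]
  calc (∑' p : Freq d, ENNReal.ofReal (wt p.1 (p.2 - j') ^ (2 * (s + t))) *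
          (‖Ψ p.1 p.2 j'‖₊ : ℝ≥0∞)^2) ^ ((1:ℝ)/2)
      ≤ c * (∑' p : Freq d, ENNReal.ofReal (wt p.1 (p.2 - j') ^ (2 * s)) *
          (‖R p.1 p.2 j'‖₊ : ℝ≥0∞)^2) ^ ((1:ℝ)/2) := tsum_sqrt_le hpt
    _ = ENNReal.ofReal ((2:ℝ)^τ * N^(2*τ+t) / γ) *
        (ENNReal.ofReal (jwt j' ^ (M:ℝ)) * (∑' p : Freq d,
          ENNReal.ofReal (wt p.1 (p.2 - j') ^ (2 * s)) *
          (‖R p.1 p.2 j'‖₊ : ℝ≥0∞)^2) ^ ((1:ℝ)/2)) := by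
        rw [hc, ENNReal.ofReal_mul hCnn, mul_assoc]
    _ ≤ ENNReal.ofReal ((2:ℝ)^τ * N^(2*τ+t) / γ) * decayNorm (-(M:ℝ)) s R := by
        apply mul_le_mul_right
        rw [decayNorm]
        have : ENNReal.ofReal (jwt j' ^ (M:ℝ)) = ENNReal.ofReal (jwt j' ^ (-(-(M:ℝ)))) := by
          rw [neg_neg]
        rw [this]
        exact le_iSup (fun j'' => ENNReal.ofReal (jwt j'' ^ (-(-(M:ℝ)))) *
          (∑' p : Freq d, ENNReal.ofReal (wt p.1 (p.2 - j'') ^ (2 * s)) *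
            (‖R p.1 p.2 j''‖₊ : ℝ≥0∞)^2) ^ ((1:ℝ)/2)) j'

/-- **Homological equation in the KAM reducibility step.** Under the
second Melnikov conditions on the purely imaginary eigenvalues `μ(j) = iζ·j + q(j)`
(truncated at `|ℓ|, |j−j'| ≤ N`), for any operator `R` (acting on zero-average functions)
with `|R|_{−M,s} < ∞`, the operator `Ψ` above solves
`ω·∂_φ Ψ + [D,Ψ] + Π_N R = D_R` with `D = diag μ(j)`, and satisfies
`|Ψ|_{0,s} ≤ C(s,τ) N^{2τ} γ^{−1} |R|_{−M,s}` and
`|Ψ|_{0,s+M} ≤ C(s,τ) N^{2τ+M} γ^{−1} |R|_{−M,s}`. -/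
theorem kam_homological_equation (d : ℕ) (hd : 0 < d) (τ s : ℝ) (M : ℕ)
    (hτ : 0 < τ) (hM : 4 * τ < (M : ℝ)) (hs : s0 d ≤ s) :
    ∃ C : ℝ, 0 < C ∧
      ∀ (γ N : ℝ), 0 < γ → γ < 1 → 0 < N →
      ∀ (ω : Fin d → ℝ) (ζ : Fin 2 → ℝ) (q : Z2 → ℂ),
        (∀ j : Z2, j ≠ 0 → (q j).re = 0) →
        (∀ (ℓ : Zd d) (j j' : Z2), j ≠ 0 → j' ≠ 0 → ¬(ℓ = 0 ∧ j = j') →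
          lnorm ℓ ≤ N → jnorm (j - j') ≤ N →
          γ / (lwt ℓ ^ τ * jnorm j ^ τ * jnorm j' ^ τ) ≤
            ‖Complex.I * cR (dotP ω ℓ) + muF ζ q j - muF ζ q j'‖) →
        ∀ R : OpCoef d,
          (∀ (ℓ : Zd d) (j j' : Z2), j = 0 ∨ j' = 0 → R ℓ j j' = 0) →
          decayNorm (-(M : ℝ)) s R ≠ ⊤ →
          (∀ (ℓ : Zd d) (j j' : Z2), j ≠ 0 → j' ≠ 0 →
            (Complex.I * cR (dotP ω ℓ) + muF ζ q j - muF ζ q j') * kamPsi N ω ζ q R ℓ j j'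
              + truncOp N R ℓ j j' = diagPart R ℓ j j') ∧
          decayNorm 0 s (kamPsi N ω ζ q R) ≤
            ENNReal.ofReal (C * N ^ (2 * τ) / γ) * decayNorm (-(M : ℝ)) s R ∧
          decayNorm 0 (s + (M : ℝ)) (kamPsi N ω ζ q R) ≤
            ENNReal.ofReal (C * N ^ (2 * τ + (M : ℝ)) / γ) * decayNorm (-(M : ℝ)) s R := by
  refine ⟨(2:ℝ)^τ, Real.rpow_pos_of_pos two_pos τ, ?_⟩
  intro γ N hγ hγ1 hN ω ζ q hq hmel R hR0 hRfin
  have h2τM : 2 * τ ≤ (M : ℝ) := by linarith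
  refine ⟨?_, ?_, ?_⟩
  · -- the homological equation
    intro ℓ j j' hj hj'
    by_cases hc : (¬(ℓ = 0 ∧ j = j')) ∧ lnorm ℓ ≤ N ∧ jnorm (j - j') ≤ N
    · have hδ : (Complex.I * cR (dotP ω ℓ) + muF ζ q j - muF ζ q j') ≠ 0 := by
        intro h0
        have hm := hmel ℓ j j' hj hj' hc.1 hc.2.1 hc.2.2
        rw [h0, norm_zero] at hm
        have hD0 : (0:ℝ) < lwt ℓ ^ τ * jnorm j ^ τ * jnorm j' ^ τ :=
          mul_pos (mul_pos
            (Real.rpow_pos_of_pos (lt_of_lt_of_le one_pos (le_max_left _ _)) τ)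
            (Real.rpow_pos_of_pos (lt_of_lt_of_le one_pos (one_le_jnorm hj)) τ))
            (Real.rpow_pos_of_pos (lt_of_lt_of_le one_pos (one_le_jnorm hj')) τ)
        have := div_pos hγ hD0
        linarith
      have hBC : lnorm ℓ ≤ N ∧ jnorm (j - j') ≤ N := ⟨hc.2.1, hc.2.2⟩
      simp only [kamPsi, truncOp, diagPart, if_pos hc, if_pos hBC, if_neg hc.1]
      field_simp
      ring
    · simp only [kamPsi, if_neg hc, mul_zero, zero_add]
      by_cases hd0 : ℓ = 0 ∧ j = j'
      · obtain ⟨h1, h2⟩ := hd0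
        subst h1; subst h2
        simp [truncOp, diagPart, lnorm_zero', jnorm_zero', hN.le]
      · have hBC : ¬(lnorm ℓ ≤ N ∧ jnorm (j - j') ≤ N) := fun h => hc ⟨hd0, h.1, h.2⟩
        simp only [truncOp, diagPart, if_neg hBC, if_neg hd0]
  · -- the bound for `|Ψ|_{0,s}`
    have h := kamPsi_decay_bound τ s 0 γ N M hτ le_rfl h2τM hγ hN ω ζ q hmel R hR0
    simpa using h
  · -- the bound for `|Ψ|_{0,s+M}`
    exact kamPsi_decay_bound τ s (M:ℝ) γ N M hτ (Nat.cast_nonneg M) h2τM hγ hN ω ζ q hmel R hR0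

end
end

section
/- (Smoothing bilinear estimate for the Euler nonlinearity) Let s ≥ s₀ and n ≥ 1 an integer. For v₁, v₂ ∈ H^s_0(𝕋^{d+2}) define the bilinear map N(v₁,v₂) := (∇_⊥(−Δ)^{−1}v₁) · ∇v₂. Then N(v₁,v₂) has zero average in x, and ‖(−Δ)^{−n/2} N(v₁, v₂)‖_s ≤ C(s) ‖v₁‖_s ‖v₂‖_s for all v₁, v₂ ∈ H^s_0. -/
open scoped BigOperators ENNReal
open MeasureTheory Filter

noncomputable section

section EulerAux

open MeasureTheory

variable {d : ℕ}

private lemma one_le_wt (ℓ : Zd d) (j : Z2) : (1:ℝ) ≤ wt ℓ j := le_max_left _ _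

private lemma wt_pos' (ℓ : Zd d) (j : Z2) : (0:ℝ) < wt ℓ j :=
  lt_of_lt_of_le one_pos (one_le_wt ℓ j)

private lemma lnorm_eq (ℓ : Zd d) :
    lnorm ℓ = ‖(WithLp.equiv 2 (Fin d → ℝ)).symm (fun i => (ℓ i : ℝ))‖ := by
  rw [EuclideanSpace.norm_eq]
  simp [lnorm, Real.norm_eq_abs, sq_abs]

private lemma jnorm_eq (j : Z2) :
    jnorm j = ‖(WithLp.equiv 2 (Fin 2 → ℝ)).symm (fun i => (j i : ℝ))‖ := by
  rw [EuclideanSpace.norm_eq]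
  simp [jnorm, Real.norm_eq_abs, sq_abs, Fin.sum_univ_two]

private lemma lnorm_add_le (x y : Zd d) : lnorm (x + y) ≤ lnorm x + lnorm y := by
  rw [lnorm_eq, lnorm_eq, lnorm_eq]
  have h : ((WithLp.equiv 2 (Fin d → ℝ)).symm (fun i => ((x + y) i : ℝ)))
      = (WithLp.equiv 2 (Fin d → ℝ)).symm (fun i => (x i : ℝ))
        + (WithLp.equiv 2 (Fin d → ℝ)).symm (fun i => (y i : ℝ)) := by
    ext i
    simp only [WithLp.equiv_symm_apply, WithLp.ofLp_toLp, PiLp.add_apply, Pi.add_apply]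
    push_cast
    ring
  rw [h]
  exact norm_add_le _ _

private lemma jnorm_add_le (x y : Z2) : jnorm (x + y) ≤ jnorm x + jnorm y := by
  rw [jnorm_eq, jnorm_eq, jnorm_eq]
  have h : ((WithLp.equiv 2 (Fin 2 → ℝ)).symm (fun i => ((x + y) i : ℝ)))
      = (WithLp.equiv 2 (Fin 2 → ℝ)).symm (fun i => (x i : ℝ))
        + (WithLp.equiv 2 (Fin 2 → ℝ)).symm (fun i => (y i : ℝ)) := by
    ext i
    simp only [WithLp.equiv_symm_apply, WithLp.ofLp_toLp, PiLp.add_apply, Pi.add_apply]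
    push_cast
    ring
  rw [h]
  exact norm_add_le _ _

private lemma lnorm_le_wt (ℓ : Zd d) (j : Z2) : lnorm ℓ ≤ wt ℓ j :=
  le_trans (le_max_left _ _) (le_max_right _ _)

private lemma jnorm_le_wt (ℓ : Zd d) (j : Z2) : jnorm j ≤ wt ℓ j :=
  le_trans (le_max_right _ _) (le_max_right _ _)

private lemma wt_add_le (x y : Zd d) (u v : Z2) :
    wt (x + y) (u + v) ≤ wt x u + wt y v := by
  have h1 := one_le_wt x u
  have h2 := one_le_wt y v
  refine max_le (by linarith) (max_le ?_ ?_)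
  · exact le_trans (lnorm_add_le x y)
      (add_le_add (lnorm_le_wt x u) (lnorm_le_wt y v))
  · exact le_trans (jnorm_add_le u v)
      (add_le_add (jnorm_le_wt x u) (jnorm_le_wt y v))

private lemma rpow_two_eq (x : ℝ≥0∞) : x ^ (2:ℝ) = x ^ (2:ℕ) := by
  rw [show (2:ℝ) = ((2:ℕ):ℝ) by norm_num, ENNReal.rpow_natCast]

private lemma rpow_half_sq (x : ℝ≥0∞) : (x ^ ((1:ℝ)/2)) ^ (2:ℝ) = x := by
  rw [← ENNReal.rpow_mul]
  norm_num

private lemma tsum_mul_le_holder {α : Type*} [Countable α] [MeasurableSpace α]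
    [MeasurableSingletonClass α] (f g : α → ℝ≥0∞) :
    ∑' p, f p * g p ≤
      (∑' p, f p ^ (2:ℝ)) ^ ((1:ℝ)/2) * (∑' p, g p ^ (2:ℝ)) ^ ((1:ℝ)/2) := by
  have h := ENNReal.lintegral_mul_le_Lp_mul_Lq (Measure.count : Measure α)
    Real.HolderConjugate.two_two
    (measurable_of_countable f).aemeasurable (measurable_of_countable g).aemeasurable
  simpa [lintegral_count] using h

private lemma tsum_add_rpow {α : Type*} [Countable α] [MeasurableSpace α]
    [MeasurableSingletonClass α] (f g : α → ℝ≥0∞) :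
    (∑' p, (f p + g p) ^ (2:ℝ)) ^ ((1:ℝ)/2) ≤
      (∑' p, f p ^ (2:ℝ)) ^ ((1:ℝ)/2) + (∑' p, g p ^ (2:ℝ)) ^ ((1:ℝ)/2) := by
  have h := ENNReal.lintegral_Lp_add_le (μ := (Measure.count : Measure α))
    (measurable_of_countable f).aemeasurable (measurable_of_countable g).aemeasurable
    (one_le_two : (1:ℝ) ≤ 2)
  simpa [lintegral_count] using h

private lemma tsum_sub_left (p : Freq d) (b : Freq d → ℝ≥0∞) :
    ∑' q : Freq d, b (p - q) = ∑' q : Freq d, b q :=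
  (Equiv.subLeft p).tsum_eq b

private lemma tsum_sub_right (q : Freq d) (b : Freq d → ℝ≥0∞) :
    ∑' p : Freq d, b (p - q) = ∑' p : Freq d, b p :=
  (Equiv.subRight q).tsum_eq b

private lemma conv_sq_le (c b : Freq d → ℝ≥0∞) :
    ∑' p : Freq d, (∑' q : Freq d, c q * b (p - q)) ^ (2:ℝ) ≤
      (∑' q : Freq d, c q ^ (2:ℝ)) * (∑' q : Freq d, b q) ^ (2:ℝ) := by
  have key : ∀ p : Freq d, (∑' q : Freq d, c q * b (p - q)) ^ (2:ℝ) ≤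
      (∑' q : Freq d, b q) * ∑' q : Freq d, c q ^ (2:ℝ) * b (p - q) := by
    intro p
    have hsplit : ∀ q : Freq d, c q * b (p - q) =
        (b (p - q) ^ ((1:ℝ)/2)) * (c q * b (p - q) ^ ((1:ℝ)/2)) := by
      intro q
      have hb : b (p - q) ^ ((1:ℝ)/2) * b (p - q) ^ ((1:ℝ)/2) = b (p - q) := by
        rw [← pow_two, ← rpow_two_eq, rpow_half_sq]
      calc c q * b (p - q) = c q * (b (p - q) ^ ((1:ℝ)/2) * b (p - q) ^ ((1:ℝ)/2)) := by
            rw [hb]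
        _ = (b (p - q) ^ ((1:ℝ)/2)) * (c q * b (p - q) ^ ((1:ℝ)/2)) := by ring
    have h1 : ∑' q : Freq d, c q * b (p - q) ≤
        (∑' q : Freq d, b (p - q)) ^ ((1:ℝ)/2) *
          (∑' q : Freq d, c q ^ (2:ℝ) * b (p - q)) ^ ((1:ℝ)/2) := by
      calc ∑' q : Freq d, c q * b (p - q)
          = ∑' q : Freq d, (b (p - q) ^ ((1:ℝ)/2)) * (c q * b (p - q) ^ ((1:ℝ)/2)) :=
            tsum_congr hsplit
        _ ≤ (∑' q : Freq d, (b (p - q) ^ ((1:ℝ)/2)) ^ (2:ℝ)) ^ ((1:ℝ)/2) *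
              (∑' q : Freq d, (c q * b (p - q) ^ ((1:ℝ)/2)) ^ (2:ℝ)) ^ ((1:ℝ)/2) :=
            tsum_mul_le_holder _ _
        _ = (∑' q : Freq d, b (p - q)) ^ ((1:ℝ)/2) *
              (∑' q : Freq d, c q ^ (2:ℝ) * b (p - q)) ^ ((1:ℝ)/2) := by
            congr 1
            · congr 1
              exact tsum_congr fun q => rpow_half_sq _
            · congr 1
              refine tsum_congr fun q => ?_
              rw [ENNReal.mul_rpow_of_nonneg _ _ (by norm_num : (0:ℝ) ≤ 2), rpow_half_sq]
    calc (∑' q : Freq d, c q * b (p - q)) ^ (2:ℝ)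
        ≤ ((∑' q : Freq d, b (p - q)) ^ ((1:ℝ)/2) *
            (∑' q : Freq d, c q ^ (2:ℝ) * b (p - q)) ^ ((1:ℝ)/2)) ^ (2:ℝ) :=
          ENNReal.rpow_le_rpow h1 (by norm_num)
      _ = (∑' q : Freq d, b (p - q)) * ∑' q : Freq d, c q ^ (2:ℝ) * b (p - q) := by
          rw [ENNReal.mul_rpow_of_nonneg _ _ (by norm_num : (0:ℝ) ≤ 2),
            rpow_half_sq, rpow_half_sq]
      _ = (∑' q : Freq d, b q) * ∑' q : Freq d, c q ^ (2:ℝ) * b (p - q) := by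
          rw [tsum_sub_left]
  calc ∑' p : Freq d, (∑' q : Freq d, c q * b (p - q)) ^ (2:ℝ)
      ≤ ∑' p : Freq d, (∑' q : Freq d, b q) * ∑' q : Freq d, c q ^ (2:ℝ) * b (p - q) :=
        ENNReal.tsum_le_tsum key
    _ = (∑' q : Freq d, b q) * ∑' p : Freq d, ∑' q : Freq d, c q ^ (2:ℝ) * b (p - q) :=
        ENNReal.tsum_mul_left
    _ = (∑' q : Freq d, b q) * ∑' q : Freq d, ∑' p : Freq d, c q ^ (2:ℝ) * b (p - q) := by
        rw [ENNReal.tsum_comm]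
    _ = (∑' q : Freq d, b q) * ∑' q : Freq d, c q ^ (2:ℝ) * ∑' p : Freq d, b (p - q) := by
        congr 1
        exact tsum_congr fun q => ENNReal.tsum_mul_left
    _ = (∑' q : Freq d, b q) * ((∑' q : Freq d, c q ^ (2:ℝ)) * ∑' p : Freq d, b p) := by
        congr 1
        rw [← ENNReal.tsum_mul_right]
        exact tsum_congr fun q => by rw [tsum_sub_right]
    _ = (∑' q : Freq d, c q ^ (2:ℝ)) * (∑' q : Freq d, b q) ^ (2:ℝ) := by
        rw [rpow_two_eq, pow_two]
        ring

private lemma tsum_le_sqrtK_mul (s : ℝ) (a : Freq d → ℝ≥0∞) :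
    ∑' p : Freq d, a p ≤
      (∑' p : Freq d, ENNReal.ofReal (wt p.1 p.2 ^ (-(2*s)))) ^ ((1:ℝ)/2) *
        (∑' p : Freq d, (ENNReal.ofReal (wt p.1 p.2 ^ s) * a p) ^ (2:ℝ)) ^ ((1:ℝ)/2) := by
  have hdecomp : ∀ p : Freq d, a p =
      ENNReal.ofReal (wt p.1 p.2 ^ (-s)) * (ENNReal.ofReal (wt p.1 p.2 ^ s) * a p) := by
    intro p
    rw [← mul_assoc, ← ENNReal.ofReal_mul (Real.rpow_nonneg (wt_pos' p.1 p.2).le _),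
      ← Real.rpow_add (wt_pos' p.1 p.2), neg_add_cancel, Real.rpow_zero,
      ENNReal.ofReal_one, one_mul]
  calc ∑' p : Freq d, a p
      = ∑' p : Freq d,
          ENNReal.ofReal (wt p.1 p.2 ^ (-s)) * (ENNReal.ofReal (wt p.1 p.2 ^ s) * a p) :=
        tsum_congr hdecomp
    _ ≤ (∑' p : Freq d, ENNReal.ofReal (wt p.1 p.2 ^ (-s)) ^ (2:ℝ)) ^ ((1:ℝ)/2) *
          (∑' p : Freq d, (ENNReal.ofReal (wt p.1 p.2 ^ s) * a p) ^ (2:ℝ)) ^ ((1:ℝ)/2) :=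
        tsum_mul_le_holder _ _
    _ = (∑' p : Freq d, ENNReal.ofReal (wt p.1 p.2 ^ (-(2*s)))) ^ ((1:ℝ)/2) *
          (∑' p : Freq d, (ENNReal.ofReal (wt p.1 p.2 ^ s) * a p) ^ (2:ℝ)) ^ ((1:ℝ)/2) := by
        congr 2
        refine tsum_congr fun p => ?_
        rw [ENNReal.ofReal_rpow_of_pos (Real.rpow_pos_of_pos (wt_pos' p.1 p.2) _),
          ← Real.rpow_mul (wt_pos' p.1 p.2).le]
        congr 2
        ring

private lemma intWeight_summable {r : ℝ} (hr : 1 < r) :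
    Summable (fun k : ℤ => (max 1 |(k:ℝ)|) ^ (-r)) := by
  have hg : Summable (fun k : ℤ => |(k:ℝ)| ^ (-r) + if k = 0 then (1:ℝ) else 0) := by
    refine (Real.summable_abs_int_rpow hr).add ?_
    refine summable_of_ne_finset_zero (s := ({0} : Finset ℤ)) ?_
    intro k hk
    simp only [Finset.mem_singleton] at hk
    simp [hk]
  refine Summable.of_nonneg_of_le
    (fun k => Real.rpow_nonneg (le_trans zero_le_one (le_max_left _ _)) _) ?_ hg
  intro k
  by_cases hk : k = 0
  · subst hk
    simp [Real.zero_rpow (by linarith : -r ≠ 0)]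
  · have h1 : (1:ℝ) ≤ |(k:ℝ)| := by
      have := Int.one_le_abs hk
      exact_mod_cast this
    rw [max_eq_right h1]
    simp [hk]

private lemma tsum_pi_prod {n : ℕ} (f : ℤ → ℝ≥0∞) :
    ∑' x : (Fin n → ℤ), ∏ i, f (x i) = (∑' k : ℤ, f k) ^ n := by
  induction n with
  | zero =>
      rw [tsum_eq_single (fun i => (0:ℤ))
        (fun b hb => absurd (Subsingleton.elim b _) hb)]
      simp
  | succ m ih =>
      have he := (Fin.consEquiv (fun _ : Fin (m+1) => ℤ)).tsum_eq
        (fun x : Fin (m+1) → ℤ => ∏ i, f (x i))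
      rw [← he]
      have hterm : ∀ y : ℤ × (Fin m → ℤ),
          (∏ i, f ((Fin.consEquiv (fun _ : Fin (m+1) => ℤ)) y i))
            = f y.1 * ∏ i, f (y.2 i) := by
        intro y
        rw [Fin.prod_univ_succ]
        simp [Fin.consEquiv]
      calc ∑' y : ℤ × (Fin m → ℤ), ∏ i, f ((Fin.consEquiv (fun _ : Fin (m+1) => ℤ)) y i)
          = ∑' y : ℤ × (Fin m → ℤ), f y.1 * ∏ i, f (y.2 i) := tsum_congr hterm
        _ = ∑' k : ℤ, ∑' z : Fin m → ℤ, f k * ∏ i, f (z i) := ENNReal.tsum_prod'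
        _ = ∑' k : ℤ, f k * ∑' z : Fin m → ℤ, ∏ i, f (z i) :=
            tsum_congr fun k => ENNReal.tsum_mul_left
        _ = (∑' k : ℤ, f k) * ∑' z : Fin m → ℤ, ∏ i, f (z i) := ENNReal.tsum_mul_right
        _ = (∑' k : ℤ, f k) ^ (m + 1) := by rw [ih, pow_succ]; ring

private lemma abs_coord_le_lnorm (ℓ : Zd d) (i : Fin d) : |(ℓ i : ℝ)| ≤ lnorm ℓ := by
  rw [lnorm, ← Real.sqrt_sq_eq_abs]
  exact Real.sqrt_le_sqrt (Finset.single_le_sum (f := fun i => ((ℓ i : ℝ))^2)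
    (fun i _ => sq_nonneg _) (Finset.mem_univ i))

private lemma abs_coord_le_jnorm (j : Z2) (i : Fin 2) : |(j i : ℝ)| ≤ jnorm j := by
  rw [jnorm, ← Real.sqrt_sq_eq_abs]
  refine Real.sqrt_le_sqrt ?_
  fin_cases i
  · show ((j 0 : ℝ)) ^ 2 ≤ ((j 0 : ℝ)) ^ 2 + ((j 1 : ℝ)) ^ 2
    nlinarith [sq_nonneg ((j 1 : ℝ))]
  · show ((j 1 : ℝ)) ^ 2 ≤ ((j 0 : ℝ)) ^ 2 + ((j 1 : ℝ)) ^ 2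
    nlinarith [sq_nonneg ((j 0 : ℝ))]

private lemma Ksq_lt_top {s : ℝ} (hd2 : (d:ℝ) + 2 < 2*s) :
    (∑' p : Freq d, ENNReal.ofReal (wt p.1 p.2 ^ (-(2*s)))) < ⊤ := by
  set r : ℝ := (2*s)/((d:ℝ)+2) with hrdef
  have hdpos : (0:ℝ) < (d:ℝ)+2 := by positivity
  have hr1 : 1 < r := (one_lt_div hdpos).2 hd2
  set f : ℤ → ℝ≥0∞ := fun k => ENNReal.ofReal ((max 1 |(k:ℝ)|) ^ (-r)) with hfdef
  have hpt : ∀ p : Freq d, ENNReal.ofReal (wt p.1 p.2 ^ (-(2*s))) ≤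
      (∏ i, f (p.1 i)) * (∏ i, f (p.2 i)) := by
    intro p
    set M : ℝ := wt p.1 p.2 with hM
    have hM1 : (1:ℝ) ≤ M := one_le_wt _ _
    have hm1 : ∀ i : Fin d, max 1 |(p.1 i : ℝ)| ≤ M :=
      fun i => max_le hM1 (le_trans (abs_coord_le_lnorm p.1 i) (lnorm_le_wt _ _))
    have hm2 : ∀ i : Fin 2, max 1 |(p.2 i : ℝ)| ≤ M :=
      fun i => max_le hM1 (le_trans (abs_coord_le_jnorm p.2 i) (jnorm_le_wt _ _))
    have hmpos : ∀ k : ℤ, (0:ℝ) < max 1 |(k:ℝ)| :=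
      fun k => lt_of_lt_of_le one_pos (le_max_left _ _)
    set P1 : ℝ := ∏ i : Fin d, max 1 |(p.1 i : ℝ)| with hP1
    set P2 : ℝ := ∏ i : Fin 2, max 1 |(p.2 i : ℝ)| with hP2
    have hP1pos : 0 < P1 := Finset.prod_pos fun i _ => hmpos _
    have hP2pos : 0 < P2 := Finset.prod_pos fun i _ => hmpos _
    have hPle : P1 * P2 ≤ M ^ (d + 2 : ℕ) := by
      have h1 : P1 ≤ M ^ d := by
        calc P1 ≤ ∏ _i : Fin d, M :=
              Finset.prod_le_prod (fun i _ => (hmpos _).le) (fun i _ => hm1 i)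
          _ = M ^ d := by simp
      have h2 : P2 ≤ M ^ 2 := by
        calc P2 ≤ ∏ _i : Fin 2, M :=
              Finset.prod_le_prod (fun i _ => (hmpos _).le) (fun i _ => hm2 i)
          _ = M ^ 2 := by simp
      calc P1 * P2 ≤ M ^ d * M ^ 2 :=
            mul_le_mul h1 h2 hP2pos.le (pow_nonneg (by linarith) d)
        _ = M ^ (d + 2 : ℕ) := (pow_add M d 2).symm
    have hreal : M ^ (-(2*s)) ≤ (P1 * P2) ^ (-r) := by
      have h1 : (M ^ (d + 2 : ℕ)) ^ (-r) ≤ (P1 * P2) ^ (-r) :=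
        Real.rpow_le_rpow_of_nonpos (mul_pos hP1pos hP2pos) hPle
          (by linarith : -r ≤ 0)
      have h2 : (M ^ (d + 2 : ℕ)) ^ (-r) = M ^ (-(2*s)) := by
        rw [← Real.rpow_natCast M (d+2), ← Real.rpow_mul (by linarith : (0:ℝ) ≤ M)]
        congr 1
        have hne : ((d:ℝ)+2) ≠ 0 := by positivity
        rw [hrdef]
        push_cast
        field_simp
      rw [← h2]
      exact h1
    have hsplit : (P1 * P2) ^ (-r) =
        (∏ i : Fin d, (max 1 |(p.1 i : ℝ)|) ^ (-r)) *
          (∏ i : Fin 2, (max 1 |(p.2 i : ℝ)|) ^ (-r)) := by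
      rw [Real.mul_rpow hP1pos.le hP2pos.le,
        Real.finset_prod_rpow _ _ (fun i _ => (hmpos _).le),
        Real.finset_prod_rpow _ _ (fun i _ => (hmpos _).le)]
    calc ENNReal.ofReal (M ^ (-(2*s)))
        ≤ ENNReal.ofReal ((P1 * P2) ^ (-r)) := ENNReal.ofReal_le_ofReal hreal
      _ = (∏ i, f (p.1 i)) * (∏ i, f (p.2 i)) := by
          rw [hsplit, ENNReal.ofReal_mul (Finset.prod_nonneg fun i _ =>
            Real.rpow_nonneg (hmpos _).le _),
            ENNReal.ofReal_prod_of_nonneg (fun i _ => Real.rpow_nonneg (hmpos _).le _),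
            ENNReal.ofReal_prod_of_nonneg (fun i _ => Real.rpow_nonneg (hmpos _).le _)]
  have hf_lt : (∑' k : ℤ, f k) < ⊤ := by
    have hsum := intWeight_summable hr1
    rw [hfdef, ← ENNReal.ofReal_tsum_of_nonneg
      (fun k => Real.rpow_nonneg (le_trans zero_le_one (le_max_left _ _)) _) hsum]
    exact ENNReal.ofReal_lt_top
  calc (∑' p : Freq d, ENNReal.ofReal (wt p.1 p.2 ^ (-(2*s))))
      ≤ ∑' p : Freq d, (∏ i, f (p.1 i)) * (∏ i, f (p.2 i)) := ENNReal.tsum_le_tsum hpt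
    _ = (∑' ℓ : Zd d, ∏ i, f (ℓ i)) * (∑' j : Z2, ∏ i, f (j i)) := by
        rw [ENNReal.tsum_prod']
        calc ∑' (ℓ : Zd d) (j : Z2), (∏ i, f (ℓ i)) * (∏ i, f (j i))
            = ∑' ℓ : Zd d, (∏ i, f (ℓ i)) * ∑' j : Z2, ∏ i, f (j i) :=
              tsum_congr fun ℓ => ENNReal.tsum_mul_left
          _ = (∑' ℓ : Zd d, ∏ i, f (ℓ i)) * (∑' j : Z2, ∏ i, f (j i)) :=
              ENNReal.tsum_mul_right
    _ = (∑' k : ℤ, f k) ^ d * (∑' k : ℤ, f k) ^ 2 := by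
        rw [tsum_pi_prod, tsum_pi_prod]
    _ < ⊤ := ENNReal.mul_lt_top (ENNReal.pow_lt_top hf_lt) (ENNReal.pow_lt_top hf_lt)

private lemma nsq_cast_ge_one {j : Z2} (hj : j ≠ 0) : (1:ℝ) ≤ ((nsq j : ℤ):ℝ) := by
  have hZ : (1:ℤ) ≤ nsq j := by
    have hne : j 0 ≠ 0 ∨ j 1 ≠ 0 := by
      by_contra h
      push_neg at h
      exact hj (funext fun i => by fin_cases i <;> simp [h.1, h.2])
    unfold nsq
    rcases hne with h | h
    · have := Int.one_le_abs h
      nlinarith [sq_nonneg (j 1), sq_abs (j 0)]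
    · have := Int.one_le_abs h
      nlinarith [sq_nonneg (j 0), sq_abs (j 1)]
  exact_mod_cast hZ

private lemma emult_norm_le {x j : Z2} (hj : j ≠ 0) {n : ℕ} (hn : 1 ≤ n) :
    ‖emult x (j - x)‖ ≤ ((nsq j : ℤ):ℝ) ^ ((n:ℝ)/2) := by
  have hjr : (1:ℝ) ≤ ((nsq j:ℤ):ℝ) := nsq_cast_ge_one hj
  have hD0 : (0:ℝ) ≤ ((nsq j:ℤ):ℝ) ^ ((n:ℝ)/2) := Real.rpow_nonneg (by linarith) _
  by_cases hx : x = 0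
  · simp [emult, hx, hD0]
  · have hxr : (1:ℝ) ≤ ((nsq x:ℤ):ℝ) := nsq_cast_ge_one hx
    have hpd : perpDot x (j - x) = perpDot x j := by
      simp only [perpDot, Pi.sub_apply]
      ring
    have hnorm : ‖emult x (j - x)‖ = |((perpDot x j : ℤ):ℝ)| / ((nsq x:ℤ):ℝ) := by
      rw [emult, if_neg hx, hpd, norm_div, norm_mul, Complex.norm_I, one_mul,
        Complex.norm_intCast, Complex.norm_intCast]
      rw [abs_of_nonneg (by linarith : (0:ℝ) ≤ ((nsq x:ℤ):ℝ))]
    rw [hnorm]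
    have hlag : ((perpDot x j:ℤ):ℝ)^2 ≤ ((nsq x:ℤ):ℝ) * ((nsq j:ℤ):ℝ) := by
      have hZ : (perpDot x j)^2 ≤ nsq x * nsq j := by
        unfold perpDot nsq
        nlinarith [sq_nonneg (x 0 * j 0 + x 1 * j 1)]
      exact_mod_cast hZ
    have h2 : |((perpDot x j:ℤ):ℝ)| / ((nsq x:ℤ):ℝ) ≤ ((nsq j:ℤ):ℝ) ^ ((1:ℝ)/2) := by
      rw [← Real.sqrt_eq_rpow]
      rw [Real.le_sqrt (by positivity) (by linarith)]
      rw [div_pow, div_le_iff₀ (by positivity)]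
      have hx2 : ((nsq x:ℤ):ℝ) ≤ ((nsq x:ℤ):ℝ)^2 := by nlinarith
      rw [sq_abs]
      nlinarith
    refine le_trans h2 (Real.rpow_le_rpow_of_exponent_le hjr ?_)
    have : (1:ℝ) ≤ (n:ℝ) := by exact_mod_cast hn
    linarith

private lemma enn_nnnorm_tsum_le {ι : Type*} (f : ι → ℂ) :
    (‖∑' i, f i‖₊ : ℝ≥0∞) ≤ ∑' i, (‖f i‖₊ : ℝ≥0∞) := by
  by_cases h : Summable fun i => ‖f i‖₊
  · rw [← ENNReal.coe_tsum h]
    exact_mod_cast nnnorm_tsum_le h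
  · have : ∑' i, (‖f i‖₊ : ℝ≥0∞) = ⊤ := by
      by_contra hne
      exact h (ENNReal.tsum_coe_ne_top_iff_summable.1 hne)
    rw [this]
    exact le_top

private lemma sob_eq (s : ℝ) (u : Fn d) :
    sobNorm s u =
      (∑' p : Freq d,
        (ENNReal.ofReal (wt p.1 p.2 ^ s) * (‖u p‖₊ : ℝ≥0∞)) ^ (2:ℝ)) ^ ((1:ℝ)/2) := by
  unfold sobNorm
  congr 1
  refine tsum_congr fun p => ?_
  rw [ENNReal.mul_rpow_of_nonneg _ _ (by norm_num : (0:ℝ) ≤ 2),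
    ENNReal.ofReal_rpow_of_pos (Real.rpow_pos_of_pos (wt_pos' p.1 p.2) _),
    ← Real.rpow_mul (wt_pos' p.1 p.2).le, rpow_two_eq]
  congr 3
  ring

private lemma rpow_sq_half (x : ℝ≥0∞) : (x ^ (2:ℝ)) ^ ((1:ℝ)/2) = x := by
  rw [← ENNReal.rpow_mul, show (2:ℝ) * ((1:ℝ)/2) = 1 by norm_num, ENNReal.rpow_one]

end EulerAux


/-- **Smoothing bilinear estimate for the Euler nonlinearity.** For
`s ≥ s₀` and any integer `n ≥ 1`, the bilinear map `N(v₁,v₂) = (∇_⊥(−Δ)^{−1}v₁)·∇v₂`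
maps zero-average functions to zero-average functions and satisfies
`‖(−Δ)^{−n/2}N(v₁,v₂)‖_s ≤ C(s)‖v₁‖_s‖v₂‖_s`. -/
theorem euler_bilinear_smoothing (d : ℕ) (hd : 0 < d) :
    ∀ s : ℝ, s0 d ≤ s → ∃ C : ℝ, 0 < C ∧
      ∀ n : ℕ, 1 ≤ n →
        ∀ v w : Fn d, zeroAvg v → zeroAvg w → sobNorm s v ≠ ⊤ → sobNorm s w ≠ ⊤ →
          zeroAvg (eulerN v w) ∧
          sobNorm s (fun p => if p.2 = 0 then 0 else
              eulerN v w p / cR (((nsq p.2 : ℤ) : ℝ) ^ ((n : ℝ) / 2))) ≤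
            ENNReal.ofReal C * sobNorm s v * sobNorm s w := by
  intro s hs
  have hs0le : (((d + 2) / 2 : ℕ) : ℝ) + 2 ≤ s := by rw [s0] at hs; exact hs
  have hs2' : (d:ℝ) + 2 < 2 * s := by
    have hnat : d + 1 ≤ 2 * ((d + 2) / 2) := by omega
    have hnatR : (d:ℝ) + 1 ≤ 2 * (((d + 2) / 2 : ℕ) : ℝ) := by exact_mod_cast hnat
    nlinarith
  have hspos : (0:ℝ) < s := by
    have : (0:ℝ) ≤ (((d + 2) / 2 : ℕ) : ℝ) := Nat.cast_nonneg _
    linarith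
  set Ksq : ℝ≥0∞ := ∑' p : Freq d, ENNReal.ofReal (wt p.1 p.2 ^ (-(2*s))) with hKsqdef
  have hKsq_top : Ksq < ⊤ := Ksq_lt_top hs2'
  set K : ℝ≥0∞ := Ksq ^ ((1:ℝ)/2) with hKdef
  have hK_top : K ≠ ⊤ := (ENNReal.rpow_lt_top_of_nonneg (by norm_num) hKsq_top.ne).ne
  refine ⟨2 * (2:ℝ) ^ s * (K.toReal + 1), by positivity, ?_⟩
  intro n hn v w hv hw hvtop hwtop
  constructor
  · -- zero average
    intro ℓ
    have hz : eulerN v w (ℓ, 0) = ∑' _q : Freq d, (0:ℂ) := by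
      unfold eulerN
      refine tsum_congr fun q => ?_
      by_cases hq : q.2 = 0
      · have : emult q.2 ((ℓ, (0:Z2)).2 - q.2) = 0 := by
          unfold emult
          rw [if_pos hq]
        rw [this, zero_mul, zero_mul]
      · have hpd : perpDot q.2 ((ℓ, (0:Z2)).2 - q.2) = 0 := by
          show perpDot q.2 ((0:Z2) - q.2) = 0
          simp only [perpDot, Pi.sub_apply, Pi.zero_apply]
          ring
        unfold emult
        rw [if_neg hq, hpd]
        push_cast
        ring
    rw [hz, tsum_zero]
  · -- the estimate
    set a : Freq d → ℝ≥0∞ := fun q => (‖v q‖₊ : ℝ≥0∞) with hadef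
    set b : Freq d → ℝ≥0∞ := fun q => (‖w q‖₊ : ℝ≥0∞) with hbdef
    set ws : Freq d → ℝ≥0∞ := fun p => ENNReal.ofReal (wt p.1 p.2 ^ s) with hwsdef
    set S : Freq d → ℝ≥0∞ := fun p => ∑' q : Freq d, a q * b (p - q) with hSdef
    have hsub : ∀ p q : Freq d, p - q = (p.1 - q.1, p.2 - q.2) := fun _ _ => rfl
    set A : ℝ≥0∞ := sobNorm s v with hAdef
    set B : ℝ≥0∞ := sobNorm s w with hBdef
    -- main abstract estimate
    have hmain : ∀ u : Fn d, (∀ p : Freq d, (‖u p‖₊ : ℝ≥0∞) ≤ S p) →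
        sobNorm s u ≤ ENNReal.ofReal (2 * (2:ℝ) ^ s * (K.toReal + 1)) * A * B := by
      intro u hu
      set E : ℝ≥0∞ := ENNReal.ofReal ((2:ℝ) ^ s) with hEdef
      set c : Freq d → ℝ≥0∞ := fun q => ws q * a q with hcdef
      set cb : Freq d → ℝ≥0∞ := fun q => ws q * b q with hcbdef
      set S1 : Freq d → ℝ≥0∞ := fun p => ∑' q : Freq d,
        (if wt (p.1 - q.1) (p.2 - q.2) ≤ wt q.1 q.2 then c q * b (p - q) else 0) with hS1def
      set S2 : Freq d → ℝ≥0∞ := fun p => ∑' q : Freq d,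
        (if wt (p.1 - q.1) (p.2 - q.2) ≤ wt q.1 q.2 then 0 else a q * cb (p - q)) with hS2def
      have hstep1 : sobNorm s u ≤ (∑' p : Freq d, (ws p * S p) ^ (2:ℝ)) ^ ((1:ℝ)/2) := by
        rw [sob_eq]
        refine ENNReal.rpow_le_rpow (ENNReal.tsum_le_tsum fun p => ?_) (by norm_num)
        exact ENNReal.rpow_le_rpow (mul_le_mul_right (hu p) _) (by norm_num)
      have hsplit : ∀ p : Freq d, ws p * S p ≤ E * S1 p + E * S2 p := by
        intro p
        have hterm : ∀ q : Freq d, ws p * (a q * b (p - q)) ≤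
            E * (if wt (p.1 - q.1) (p.2 - q.2) ≤ wt q.1 q.2 then c q * b (p - q) else 0) +
            E * (if wt (p.1 - q.1) (p.2 - q.2) ≤ wt q.1 q.2 then 0
                  else a q * cb (p - q)) := by
          intro q
          have htri : wt p.1 p.2 ≤ wt q.1 q.2 + wt (p.1 - q.1) (p.2 - q.2) := by
            have h := wt_add_le q.1 (p.1 - q.1) q.2 (p.2 - q.2)
            have e1 : q.1 + (p.1 - q.1) = p.1 := by abel
            have e2 : q.2 + (p.2 - q.2) = p.2 := by abel
            rw [e1, e2] at h
            exact h
          by_cases hcond : wt (p.1 - q.1) (p.2 - q.2) ≤ wt q.1 q.2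
          · rw [if_pos hcond, if_pos hcond, mul_zero, add_zero]
            have hwle : wt p.1 p.2 ≤ 2 * wt q.1 q.2 := by linarith
            have hws_le : ws p ≤ E * ws q := by
              rw [hwsdef, hEdef]
              simp only []
              rw [← ENNReal.ofReal_mul (by positivity)]
              apply ENNReal.ofReal_le_ofReal
              calc wt p.1 p.2 ^ s ≤ (2 * wt q.1 q.2) ^ s :=
                  Real.rpow_le_rpow (wt_pos' _ _).le hwle hspos.le
                _ = (2:ℝ) ^ s * wt q.1 q.2 ^ s :=
                  Real.mul_rpow (by norm_num) (wt_pos' _ _).le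
            calc ws p * (a q * b (p - q)) ≤ (E * ws q) * (a q * b (p - q)) :=
                mul_le_mul_left hws_le _
              _ = E * (c q * b (p - q)) := by rw [hcdef]; ring
          · rw [if_neg hcond, if_neg hcond, mul_zero, zero_add]
            push_neg at hcond
            have hwle : wt p.1 p.2 ≤ 2 * wt (p.1 - q.1) (p.2 - q.2) := by linarith
            have hws_le : ws p ≤ E * ws (p - q) := by
              rw [hwsdef, hEdef]
              simp only []
              rw [← ENNReal.ofReal_mul (by positivity)]
              apply ENNReal.ofReal_le_ofReal
              calc wt p.1 p.2 ^ s ≤ (2 * wt (p.1 - q.1) (p.2 - q.2)) ^ s :=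
                  Real.rpow_le_rpow (wt_pos' _ _).le hwle hspos.le
                _ = (2:ℝ) ^ s * wt (p - q).1 (p - q).2 ^ s :=
                  Real.mul_rpow (by norm_num) (wt_pos' _ _).le
            calc ws p * (a q * b (p - q)) ≤ (E * ws (p - q)) * (a q * b (p - q)) :=
                mul_le_mul_left hws_le _
              _ = E * (a q * cb (p - q)) := by rw [hcbdef]; ring
        calc ws p * S p = ∑' q : Freq d, ws p * (a q * b (p - q)) := by
              rw [hSdef]
              exact ENNReal.tsum_mul_left.symm
          _ ≤ ∑' q : Freq d,
              (E * (if wt (p.1 - q.1) (p.2 - q.2) ≤ wt q.1 q.2 then c q * b (p - q) else 0) +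
               E * (if wt (p.1 - q.1) (p.2 - q.2) ≤ wt q.1 q.2 then 0
                    else a q * cb (p - q))) := ENNReal.tsum_le_tsum hterm
          _ = E * S1 p + E * S2 p := by
              rw [ENNReal.tsum_add, ENNReal.tsum_mul_left, ENNReal.tsum_mul_left]
      have hpull : ∀ T : Freq d → ℝ≥0∞,
          (∑' p : Freq d, (E * T p) ^ (2:ℝ)) ^ ((1:ℝ)/2) =
            E * (∑' p : Freq d, T p ^ (2:ℝ)) ^ ((1:ℝ)/2) := by
        intro T
        have h1 : ∀ p : Freq d, (E * T p) ^ (2:ℝ) = E ^ (2:ℝ) * T p ^ (2:ℝ) :=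
          fun p => ENNReal.mul_rpow_of_nonneg _ _ (by norm_num)
        rw [tsum_congr h1, ENNReal.tsum_mul_left,
          ENNReal.mul_rpow_of_nonneg _ _ (by norm_num), rpow_sq_half]
      have hstep3 : (∑' p : Freq d, (ws p * S p) ^ (2:ℝ)) ^ ((1:ℝ)/2) ≤
          E * (∑' p : Freq d, S1 p ^ (2:ℝ)) ^ ((1:ℝ)/2) +
            E * (∑' p : Freq d, S2 p ^ (2:ℝ)) ^ ((1:ℝ)/2) := by
        have h1 : (∑' p : Freq d, (ws p * S p) ^ (2:ℝ)) ^ ((1:ℝ)/2) ≤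
            (∑' p : Freq d, (E * S1 p + E * S2 p) ^ (2:ℝ)) ^ ((1:ℝ)/2) :=
          ENNReal.rpow_le_rpow (ENNReal.tsum_le_tsum fun p =>
            ENNReal.rpow_le_rpow (hsplit p) (by norm_num)) (by norm_num)
        refine le_trans h1 (le_trans (tsum_add_rpow _ _) ?_)
        rw [hpull S1, hpull S2]
      have hAeq : (∑' q : Freq d, c q ^ (2:ℝ)) ^ ((1:ℝ)/2) = A := (sob_eq s v).symm
      have hBeq : (∑' q : Freq d, cb q ^ (2:ℝ)) ^ ((1:ℝ)/2) = B := (sob_eq s w).symm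
      have hbK : (∑' q : Freq d, b q) ≤ K * B := by
        have h := tsum_le_sqrtK_mul s b
        rw [← hKsqdef] at h
        calc (∑' q : Freq d, b q) ≤ Ksq ^ ((1:ℝ)/2) *
              (∑' p : Freq d, (ws p * b p) ^ (2:ℝ)) ^ ((1:ℝ)/2) := h
          _ = K * B := by rw [← hBeq, hKdef]
      have haK : (∑' q : Freq d, a q) ≤ K * A := by
        have h := tsum_le_sqrtK_mul s a
        rw [← hKsqdef] at h
        calc (∑' q : Freq d, a q) ≤ Ksq ^ ((1:ℝ)/2) *
              (∑' p : Freq d, (ws p * a p) ^ (2:ℝ)) ^ ((1:ℝ)/2) := h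
          _ = K * A := by rw [← hAeq, hKdef]
      have hyoung1 : (∑' p : Freq d, S1 p ^ (2:ℝ)) ^ ((1:ℝ)/2) ≤ A * (K * B) := by
        have hS1le : ∀ p : Freq d, S1 p ≤ ∑' q : Freq d, c q * b (p - q) := by
          intro p
          rw [hS1def]
          refine ENNReal.tsum_le_tsum fun q => ?_
          split_ifs
          · exact le_rfl
          · exact zero_le
        have h2 : (∑' p : Freq d, S1 p ^ (2:ℝ)) ≤
            (∑' q : Freq d, c q ^ (2:ℝ)) * (∑' q : Freq d, b q) ^ (2:ℝ) :=
          le_trans (ENNReal.tsum_le_tsum fun p =>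
            ENNReal.rpow_le_rpow (hS1le p) (by norm_num)) (conv_sq_le c b)
        calc (∑' p : Freq d, S1 p ^ (2:ℝ)) ^ ((1:ℝ)/2)
            ≤ ((∑' q : Freq d, c q ^ (2:ℝ)) * (∑' q : Freq d, b q) ^ (2:ℝ)) ^ ((1:ℝ)/2) :=
              ENNReal.rpow_le_rpow h2 (by norm_num)
          _ = (∑' q : Freq d, c q ^ (2:ℝ)) ^ ((1:ℝ)/2) * (∑' q : Freq d, b q) := by
              rw [ENNReal.mul_rpow_of_nonneg _ _ (by norm_num), rpow_sq_half]
          _ = A * (∑' q : Freq d, b q) := by rw [hAeq]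
          _ ≤ A * (K * B) := mul_le_mul_right hbK A
      have hyoung2 : (∑' p : Freq d, S2 p ^ (2:ℝ)) ^ ((1:ℝ)/2) ≤ B * (K * A) := by
        have hS2le : ∀ p : Freq d, S2 p ≤ ∑' q : Freq d, cb q * a (p - q) := by
          intro p
          rw [hS2def]
          have h1 : (∑' q : Freq d,
              (if wt (p.1 - q.1) (p.2 - q.2) ≤ wt q.1 q.2 then 0 else a q * cb (p - q))) ≤
              ∑' q : Freq d, a q * cb (p - q) := by
            refine ENNReal.tsum_le_tsum fun q => ?_
            split_ifs
            · exact zero_le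
            · exact le_rfl
          refine le_trans h1 (le_of_eq ?_)
          have h2 := (Equiv.subLeft p).tsum_eq (fun q : Freq d => a q * cb (p - q))
          simp only [Equiv.subLeft_apply, sub_sub_cancel] at h2
          rw [← h2]
          exact tsum_congr fun q => mul_comm _ _
        have h2 : (∑' p : Freq d, S2 p ^ (2:ℝ)) ≤
            (∑' q : Freq d, cb q ^ (2:ℝ)) * (∑' q : Freq d, a q) ^ (2:ℝ) :=
          le_trans (ENNReal.tsum_le_tsum fun p =>
            ENNReal.rpow_le_rpow (hS2le p) (by norm_num)) (conv_sq_le cb a)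
        calc (∑' p : Freq d, S2 p ^ (2:ℝ)) ^ ((1:ℝ)/2)
            ≤ ((∑' q : Freq d, cb q ^ (2:ℝ)) * (∑' q : Freq d, a q) ^ (2:ℝ)) ^ ((1:ℝ)/2) :=
              ENNReal.rpow_le_rpow h2 (by norm_num)
          _ = (∑' q : Freq d, cb q ^ (2:ℝ)) ^ ((1:ℝ)/2) * (∑' q : Freq d, a q) := by
              rw [ENNReal.mul_rpow_of_nonneg _ _ (by norm_num), rpow_sq_half]
          _ = B * (∑' q : Freq d, a q) := by rw [hBeq]
          _ ≤ B * (K * A) := mul_le_mul_right haK B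
      have hC : (2:ℝ≥0∞) * (E * K) ≤
          ENNReal.ofReal (2 * (2:ℝ) ^ s * (K.toReal + 1)) := by
        have hKle : K ≤ ENNReal.ofReal (K.toReal + 1) := by
          calc K = ENNReal.ofReal K.toReal := (ENNReal.ofReal_toReal hK_top).symm
            _ ≤ ENNReal.ofReal (K.toReal + 1) := ENNReal.ofReal_le_ofReal (by linarith)
        calc (2:ℝ≥0∞) * (E * K)
            ≤ ENNReal.ofReal 2 * (ENNReal.ofReal ((2:ℝ) ^ s) *
                ENNReal.ofReal (K.toReal + 1)) := by
              rw [show (2:ℝ≥0∞) = ENNReal.ofReal 2 by norm_num]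
              exact mul_le_mul_right (mul_le_mul_right hKle E) _
          _ = ENNReal.ofReal (2 * (2:ℝ) ^ s * (K.toReal + 1)) := by
              rw [← ENNReal.ofReal_mul (by positivity), ← ENNReal.ofReal_mul (by norm_num)]
              congr 1
              ring
      calc sobNorm s u ≤ (∑' p : Freq d, (ws p * S p) ^ (2:ℝ)) ^ ((1:ℝ)/2) := hstep1
        _ ≤ E * (∑' p : Freq d, S1 p ^ (2:ℝ)) ^ ((1:ℝ)/2) +
              E * (∑' p : Freq d, S2 p ^ (2:ℝ)) ^ ((1:ℝ)/2) := hstep3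
        _ ≤ E * (A * (K * B)) + E * (B * (K * A)) :=
            add_le_add (mul_le_mul_right hyoung1 E) (mul_le_mul_right hyoung2 E)
        _ = ((2:ℝ≥0∞) * (E * K)) * (A * B) := by ring
        _ ≤ ENNReal.ofReal (2 * (2:ℝ) ^ s * (K.toReal + 1)) * (A * B) :=
            mul_le_mul_left hC _
        _ = ENNReal.ofReal (2 * (2:ℝ) ^ s * (K.toReal + 1)) * A * B := by ring
    -- pointwise bound for the actual function
    refine hmain _ fun p => ?_
    by_cases hp : p.2 = 0
    · simp only [hp, if_pos]
      simp
    · rw [if_neg hp]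
      have hDpos : (1:ℝ) ≤ ((nsq p.2 : ℤ):ℝ) ^ ((n:ℝ)/2) := by
        have h0 := nsq_cast_ge_one hp
        calc (1:ℝ) = ((nsq p.2 : ℤ):ℝ) ^ (0:ℝ) := (Real.rpow_zero _).symm
          _ ≤ ((nsq p.2 : ℤ):ℝ) ^ ((n:ℝ)/2) :=
            Real.rpow_le_rpow_of_exponent_le h0 (by positivity)
      set D : ℝ := ((nsq p.2 : ℤ):ℝ) ^ ((n:ℝ)/2) with hDdef
      have hdiv : eulerN v w p / cR D =
          ∑' q : Freq d,
            (emult q.2 (p.2 - q.2) * v q * w (p.1 - q.1, p.2 - q.2)) * (cR D)⁻¹ := by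
        rw [div_eq_mul_inv]
        unfold eulerN
        exact (tsum_mul_right).symm
      rw [hdiv]
      refine le_trans (enn_nnnorm_tsum_le _) (ENNReal.tsum_le_tsum fun q => ?_)
      have hreal : ‖(emult q.2 (p.2 - q.2) * v q * w (p.1 - q.1, p.2 - q.2)) * (cR D)⁻¹‖ ≤
          ‖v q‖ * ‖w (p.1 - q.1, p.2 - q.2)‖ := by
        have hem : ‖emult q.2 (p.2 - q.2)‖ ≤ D := emult_norm_le hp hn
        have hcRD : ‖(cR D)⁻¹‖ = D⁻¹ := by
          rw [norm_inv]
          unfold cR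
          rw [Complex.norm_real, Real.norm_eq_abs,
            abs_of_nonneg (by linarith : (0:ℝ) ≤ D)]
        rw [norm_mul, norm_mul, norm_mul, hcRD]
        have hnn : (0:ℝ) ≤ ‖v q‖ * ‖w (p.1 - q.1, p.2 - q.2)‖ := by positivity
        calc ‖emult q.2 (p.2 - q.2)‖ * ‖v q‖ * ‖w (p.1 - q.1, p.2 - q.2)‖ * D⁻¹
            ≤ D * ‖v q‖ * ‖w (p.1 - q.1, p.2 - q.2)‖ * D⁻¹ := by
              have hD0 : (0:ℝ) ≤ D := by linarith
              gcongr
          _ = (‖v q‖ * ‖w (p.1 - q.1, p.2 - q.2)‖) * (D * D⁻¹) := by ring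
          _ = ‖v q‖ * ‖w (p.1 - q.1, p.2 - q.2)‖ := by
              rw [mul_inv_cancel₀ ((lt_of_lt_of_le one_pos hDpos).ne' : D ≠ 0), mul_one]
      have hsub2 : b (p - q) = (‖w (p.1 - q.1, p.2 - q.2)‖₊ : ℝ≥0∞) := by
        rw [hbdef]
        rfl
      rw [hsub2]
      rw [← ENNReal.coe_mul]
      apply ENNReal.coe_le_coe.2
      rw [← NNReal.coe_le_coe]
      push_cast
      exact hreal

end
end

section
/- (Measure of a resonant set) Let n ≥ 1, let Ω ⊂ ℝ^n be a bounded measurable set, let k ∈ ℤ^n∖{0}, let δ > 0, and let r : ℝ^n → ℝ be a Lipschitz function with Lipschitz constant at most |k|/2. Then the Lebesgue measure of the set { λ ∈ Ω : |λ·k + r(λ)| < δ } is at most C(Ω) δ / |k|, for a constant C(Ω) depending only on Ω. -/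
open scoped BigOperators ENNReal
open MeasureTheory Filter

noncomputable section

private lemma sqrt_sum_sq_le_dist {N : ℕ} (x y : Fin N → ℝ) :
    Real.sqrt (∑ i, (x i - y i) ^ 2) ≤ Real.sqrt N * dist x y := by
  have h1 : ∑ i, (x i - y i) ^ 2 ≤ (N : ℝ) * dist x y ^ 2 := by
    calc ∑ i, (x i - y i) ^ 2 ≤ ∑ _i : Fin N, dist x y ^ 2 := by
          refine Finset.sum_le_sum fun i _ => ?_
          rw [← sq_abs]
          have h2 : |x i - y i| ≤ dist x y := by
            rw [← Real.dist_eq]; exact dist_le_pi_dist x y i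
          exact pow_le_pow_left₀ (abs_nonneg _) h2 2
      _ = (N : ℝ) * dist x y ^ 2 := by simp [Finset.sum_const, nsmul_eq_mul]
  calc Real.sqrt (∑ i, (x i - y i) ^ 2) ≤ Real.sqrt ((N : ℝ) * dist x y ^ 2) :=
        Real.sqrt_le_sqrt h1
    _ = Real.sqrt N * dist x y := by
        rw [Real.sqrt_mul (Nat.cast_nonneg N), Real.sqrt_sq dist_nonneg]

private lemma abs_coord_le_norm {N : ℕ} (w : EuclideanSpace ℝ (Fin N)) (i : Fin N) :
    |w i| ≤ ‖w‖ := by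
  rw [EuclideanSpace.norm_eq, ← Real.sqrt_sq_eq_abs]
  apply Real.sqrt_le_sqrt
  have := Finset.single_le_sum (f := fun j => ‖w j‖ ^ 2) (fun j _ => sq_nonneg _) (Finset.mem_univ i)
  simpa [Real.norm_eq_abs, sq_abs] using this

private lemma sqrt_sum_sq_eq_dist {N : ℕ} (a b : EuclideanSpace ℝ (Fin N)) :
    Real.sqrt (∑ i, (a i - b i) ^ 2) = dist a b := by
  rw [EuclideanSpace.dist_eq]
  congr 1
  refine Finset.sum_congr rfl fun i _ => ?_
  rw [Real.dist_eq, sq_abs]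

private lemma oneDim_measure_le {f : ℝ → ℝ} {c δ : ℝ} (hc : 0 < c)
    (hf : ∀ t1 t2 : ℝ, c * |t1 - t2| ≤ |f t1 - f t2|) :
    volume {t : ℝ | |f t| < δ} ≤ ENNReal.ofReal (4 * δ / c) := by
  rcases Set.eq_empty_or_nonempty {t : ℝ | |f t| < δ} with h | ⟨t0, ht0⟩
  · simp [h]
  · have hsub : {t : ℝ | |f t| < δ} ⊆ Set.Icc (t0 - 2 * δ / c) (t0 + 2 * δ / c) := by
      intro t ht
      have h1 : c * |t - t0| ≤ |f t - f t0| := hf t t0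
      have h2 : |f t - f t0| < 2 * δ := by
        have h3 : |f t - f t0| ≤ |f t| + |f t0| := by
          have := abs_add_le (f t) (-(f t0)); simpa [sub_eq_add_neg] using this
        have := ht.out; have := ht0.out; linarith
      have h4 : |t - t0| ≤ 2 * δ / c := by
        rw [le_div_iff₀ hc]
        nlinarith
      rcases abs_le.1 h4 with ⟨h5, h6⟩
      exact ⟨by linarith, by linarith⟩
    calc volume {t : ℝ | |f t| < δ} ≤ volume (Set.Icc (t0 - 2 * δ / c) (t0 + 2 * δ / c)) :=
          measure_mono hsub
      _ = ENNReal.ofReal (4 * δ / c) := by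
          rw [Real.volume_Icc]; congr 1; ring


/-- **Measure of a resonant set.** Let `Ω ⊂ ℝ^n` be bounded and
measurable, `k ∈ ℤ^n∖{0}`, `δ > 0`, and let `r : ℝ^n → ℝ` be Lipschitz (for the
Euclidean distance) with constant at most `|k|/2`.  Then
`|{λ ∈ Ω : |λ·k + r(λ)| < δ}| ≤ C(Ω) δ/|k|`. -/
theorem resonant_set_measure (n : ℕ) (hn : 1 ≤ n) (Ω : Set (Fin n → ℝ))
    (hΩm : MeasurableSet Ω) (hΩb : Bornology.IsBounded Ω) :
    ∃ C : ℝ, 0 < C ∧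
      ∀ (k : Fin n → ℤ), k ≠ 0 → ∀ δ : ℝ, 0 < δ →
        ∀ r : (Fin n → ℝ) → ℝ,
          (∀ x y : Fin n → ℝ,
            |r x - r y| ≤ Real.sqrt (∑ i, ((k i : ℝ)) ^ 2) / 2 *
              Real.sqrt (∑ i, (x i - y i) ^ 2)) →
          volume {lam : Fin n → ℝ | lam ∈ Ω ∧
              |(∑ i, lam i * (k i : ℝ)) + r lam| < δ} ≤
            ENNReal.ofReal (C * δ / Real.sqrt (∑ i, ((k i : ℝ)) ^ 2)) := by
  obtain ⟨m, rfl⟩ : ∃ m, n = m + 1 := ⟨n - 1, by omega⟩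
  obtain ⟨R₀, hR₀⟩ := hΩb.subset_closedBall 0
  set R : ℝ := max R₀ 0 with hRdef
  have hR : Ω ⊆ Metric.closedBall 0 R :=
    hR₀.trans (Metric.closedBall_subset_closedBall (le_max_left _ _))
  have hRnn : 0 ≤ R := le_max_right _ _
  set RE : ℝ := Real.sqrt (m + 1) * R with hREdef
  have hREnn : 0 ≤ RE := by positivity
  refine ⟨8 * (2 * RE + 1) ^ m, by positivity, ?_⟩
  intro k hk δ hδ r hr
  -- the Euclidean vector associated to k
  set kR : EuclideanSpace ℝ (Fin (m+1)) := (WithLp.equiv 2 _).symm (fun i => (k i : ℝ)) with hkRdef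
  have happk : ∀ i, kR i = (k i : ℝ) := fun i => rfl
  have hknorm : Real.sqrt (∑ i, ((k i : ℝ)) ^ 2) = ‖kR‖ := by
    rw [EuclideanSpace.norm_eq]
    congr 1
    refine Finset.sum_congr rfl fun i _ => ?_
    rw [happk, Real.norm_eq_abs, sq_abs]
  have hkpos : 0 < ‖kR‖ := by
    rw [norm_pos_iff]
    intro h
    apply hk
    funext i
    have h1 : kR i = 0 := by rw [h]; rfl
    have h2 : ((k i : ℝ)) = 0 := (happk i) ▸ h1
    exact_mod_cast h2
  -- the rotation T sending e0 to k/|k|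
  set u : EuclideanSpace ℝ (Fin (m+1)) := ‖kR‖⁻¹ • kR with hudef
  have hu : ‖u‖ = 1 := by
    rw [hudef, norm_smul, norm_inv, norm_norm, inv_mul_cancel₀ hkpos.ne']
  set e0 : EuclideanSpace ℝ (Fin (m+1)) := EuclideanSpace.single (0 : Fin (m+1)) (1 : ℝ)
    with he0def
  have he0 : ‖e0‖ = 1 := by simp [he0def]
  set T : EuclideanSpace ℝ (Fin (m+1)) ≃ₗᵢ[ℝ] EuclideanSpace ℝ (Fin (m+1)) :=
    Submodule.reflection (ℝ ∙ (e0 - u))ᗮ with hTdef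
  have hT : T e0 = u := Submodule.reflection_sub (he0.trans hu.symm)
  have hie : ∀ w : EuclideanSpace ℝ (Fin (m+1)), (inner ℝ w e0 : ℝ) = w 0 := by
    intro w
    rw [he0def, EuclideanSpace.inner_single_right]
    simp
  have hsm : ‖kR‖ • u = kR := by
    rw [hudef, smul_smul, mul_inv_cancel₀ hkpos.ne', one_smul]
  have hdotT : ∀ w : EuclideanSpace ℝ (Fin (m+1)),
      ∑ i, (T w) i * (k i : ℝ) = ‖kR‖ * w 0 := by
    intro w
    have h1 : (inner ℝ (T w) kR : ℝ) = ∑ i, (T w) i * (k i : ℝ) := by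
      rw [PiLp.inner_apply]
      refine Finset.sum_congr rfl fun i _ => ?_
      rw [happk]; exact Real.inner_apply _ _
    calc ∑ i, (T w) i * (k i : ℝ) = (inner ℝ (T w) kR : ℝ) := h1.symm
      _ = (inner ℝ (T w) (‖kR‖ • u) : ℝ) := by rw [hsm]
      _ = ‖kR‖ * (inner ℝ (T w) u : ℝ) := real_inner_smul_right _ _ _
      _ = ‖kR‖ * (inner ℝ (T w) (T e0) : ℝ) := by rw [hT]
      _ = ‖kR‖ * (inner ℝ w e0 : ℝ) := by rw [LinearIsometryEquiv.inner_map_map]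
      _ = ‖kR‖ * w 0 := by rw [hie]
  -- the measure preserving parametrization g
  set g : ℝ × (Fin m → ℝ) → (Fin (m+1) → ℝ) := fun z =>
    (MeasurableEquiv.toLp 2 (Fin (m+1) → ℝ)).symm
      (T ((MeasurableEquiv.toLp 2 (Fin (m+1) → ℝ)).symm.symm (Fin.insertNth 0 z.1 z.2))) with hgdef
  have hg : MeasurePreserving g volume volume := by
    have h1 := (measurePreserving_piFinSuccAbove (fun _ : Fin (m+1) => (volume : Measure ℝ)) 0).symm
    have h2 := (EuclideanSpace.volume_preserving_symm_measurableEquiv_toLp (Fin (m+1))).symm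
    have h3 := T.measurePreserving
    have h4 := EuclideanSpace.volume_preserving_symm_measurableEquiv_toLp (Fin (m+1))
    exact (((h4.comp h3).comp h2).comp h1 : _)
  have happg : ∀ z : ℝ × (Fin m → ℝ), ∀ i,
      g z i = T ((MeasurableEquiv.toLp 2 (Fin (m+1) → ℝ)).symm.symm (Fin.insertNth 0 z.1 z.2)) i :=
    fun z i => rfl
  -- measurability of the resonant set
  set S : Set (Fin (m+1) → ℝ) :=
    {lam : Fin (m+1) → ℝ | lam ∈ Ω ∧ |(∑ i, lam i * (k i : ℝ)) + r lam| < δ} with hSdef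
  have hrc : Continuous r := by
    have hlip : LipschitzWith (Real.toNNReal (Real.sqrt (∑ i, ((k i : ℝ)) ^ 2) / 2 *
        Real.sqrt (m + 1))) r := by
      apply LipschitzWith.of_dist_le_mul
      intro x y
      have h1 := hr x y
      have h2 := sqrt_sum_sq_le_dist x y
      have h3 : (0 : ℝ) ≤ Real.sqrt (∑ i, ((k i : ℝ)) ^ 2) / 2 := by positivity
      calc dist (r x) (r y) = |r x - r y| := Real.dist_eq _ _
        _ ≤ Real.sqrt (∑ i, ((k i : ℝ)) ^ 2) / 2 * Real.sqrt (∑ i, (x i - y i) ^ 2) := h1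
        _ ≤ Real.sqrt (∑ i, ((k i : ℝ)) ^ 2) / 2 * (Real.sqrt (m + 1) * dist x y) := by
              have := mul_le_mul_of_nonneg_left h2 h3
              simpa using this
        _ = (Real.toNNReal (Real.sqrt (∑ i, ((k i : ℝ)) ^ 2) / 2 * Real.sqrt (m + 1)) : ℝ)
              * dist x y := by
              rw [Real.coe_toNNReal _ (by positivity)]
              push_cast
              ring
    exact hlip.continuous
  have hScont : Continuous fun lam : Fin (m+1) → ℝ => (∑ i, lam i * (k i : ℝ)) + r lam := by
    exact (continuous_finset_sum _ fun i _ => (continuous_apply i).mul continuous_const).add hrc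
  have hSm : MeasurableSet S := by
    have : S = Ω ∩ (fun lam : Fin (m+1) → ℝ =>
        |(∑ i, lam i * (k i : ℝ)) + r lam|) ⁻¹' (Set.Iio δ) := rfl
    rw [this]
    exact hΩm.inter ((hScont.abs.measurable) measurableSet_Iio)
  -- Fubini
  have key : volume S = ∫⁻ y, volume {t : ℝ | g (t, y) ∈ S} := by
    rw [← hg.measure_preimage hSm.nullMeasurableSet, Measure.volume_eq_prod,
      Measure.prod_apply_symm (hg.measurable hSm)]
    rfl
  -- the slice dot product
  have hdot : ∀ (t : ℝ) (y : Fin m → ℝ), ∑ i, g (t, y) i * (k i : ℝ) = ‖kR‖ * t := by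
    intro t y
    have h1 := hdotT ((MeasurableEquiv.toLp 2 (Fin (m+1) → ℝ)).symm.symm (Fin.insertNth 0 t y))
    have h2 : ((MeasurableEquiv.toLp 2 (Fin (m+1) → ℝ)).symm.symm (Fin.insertNth 0 t y)) 0
        = t := Fin.insertNth_apply_same (α := fun _ : Fin (m+1) => ℝ) 0 t y
    rw [h2] at h1
    exact h1
  -- the slice Lipschitz bound
  have hslip : ∀ (y : Fin m → ℝ) (t1 t2 : ℝ),
      |r (g (t1, y)) - r (g (t2, y))| ≤ ‖kR‖ / 2 * |t1 - t2| := by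
    intro y t1 t2
    have h1 := hr (g (t1, y)) (g (t2, y))
    have h2 : Real.sqrt (∑ i, (g (t1, y) i - g (t2, y) i) ^ 2) = |t1 - t2| := by
      set w1 : EuclideanSpace ℝ (Fin (m+1)) :=
        (MeasurableEquiv.toLp 2 (Fin (m+1) → ℝ)).symm.symm (Fin.insertNth 0 t1 y) with hw1
      set w2 : EuclideanSpace ℝ (Fin (m+1)) :=
        (MeasurableEquiv.toLp 2 (Fin (m+1) → ℝ)).symm.symm (Fin.insertNth 0 t2 y) with hw2
      have h3 : Real.sqrt (∑ i, (g (t1, y) i - g (t2, y) i) ^ 2)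
          = dist (T w1) (T w2) := by
        rw [← sqrt_sum_sq_eq_dist (T w1) (T w2)]
        congr 1
      have h5 : ∑ i, (w1 i - w2 i) ^ 2 = (t1 - t2) ^ 2 := by
        have heq : ∀ i, w1 i - w2 i
            = Fin.insertNth (α := fun _ : Fin (m+1) => ℝ) 0 t1 y i
              - Fin.insertNth (α := fun _ : Fin (m+1) => ℝ) 0 t2 y i := fun i => rfl
        calc ∑ i, (w1 i - w2 i) ^ 2
            = ∑ i, (Fin.insertNth (α := fun _ : Fin (m+1) => ℝ) 0 t1 y i
              - Fin.insertNth (α := fun _ : Fin (m+1) => ℝ) 0 t2 y i) ^ 2 := by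
              simp only [heq]
          _ = (t1 - t2) ^ 2 := by
              simp [Fin.insertNth_zero, Fin.sum_univ_succ]
      rw [h3, T.dist_map, ← sqrt_sum_sq_eq_dist w1 w2, h5, Real.sqrt_sq_eq_abs]
    rw [h2] at h1
    rw [← hknorm]
    exact h1
  -- the bounding box
  set K : Set (Fin m → ℝ) := Set.pi Set.univ (fun _ : Fin m => Set.Icc (-RE) RE) with hKdef
  have hKmem : ∀ (t : ℝ) (y : Fin m → ℝ), g (t, y) ∈ Ω → y ∈ K := by
    intro t y hmem
    set w : EuclideanSpace ℝ (Fin (m+1)) :=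
      (MeasurableEquiv.toLp 2 (Fin (m+1) → ℝ)).symm.symm (Fin.insertNth 0 t y) with hwdef
    have hx : ‖T w‖ ≤ RE := by
      have hb := hR hmem
      rw [Metric.mem_closedBall, dist_zero_right] at hb
      have h1 : ∀ i, |(T w) i| ≤ R := by
        intro i
        have := norm_le_pi_norm (g (t, y)) i
        rw [Real.norm_eq_abs] at this
        exact (happg (t, y) i ▸ this).trans hb
      rw [EuclideanSpace.norm_eq]
      calc Real.sqrt (∑ i, ‖(T w) i‖ ^ 2) ≤ Real.sqrt ((m + 1 : ℕ) * R ^ 2) := by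
            apply Real.sqrt_le_sqrt
            calc ∑ i, ‖(T w) i‖ ^ 2 ≤ ∑ _i : Fin (m+1), R ^ 2 := by
                  refine Finset.sum_le_sum fun i _ => ?_
                  rw [Real.norm_eq_abs]
                  exact pow_le_pow_left₀ (abs_nonneg _) (h1 i) 2
              _ = ((m + 1 : ℕ) : ℝ) * R ^ 2 := by simp [Finset.sum_const, nsmul_eq_mul]
        _ = RE := by
            rw [Real.sqrt_mul (Nat.cast_nonneg _), Real.sqrt_sq hRnn, hREdef]
            norm_num
    have hw : ‖w‖ ≤ RE := by rw [← T.norm_map w]; exact hx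
    intro j _
    have h2 : |w (Fin.succAbove 0 j)| ≤ RE := (abs_coord_le_norm w _).trans hw
    have h3 : w (Fin.succAbove 0 j) = y j :=
      Fin.insertNth_apply_succAbove (α := fun _ : Fin (m+1) => ℝ) 0 t y j
    rw [h3] at h2
    exact abs_le.1 h2
  -- slice estimate
  have hslice : ∀ y : Fin m → ℝ, volume {t : ℝ | g (t, y) ∈ S}
      ≤ K.indicator (fun _ => ENNReal.ofReal (8 * δ / ‖kR‖)) y := by
    intro y
    rcases Set.eq_empty_or_nonempty {t : ℝ | g (t, y) ∈ S} with h | ⟨t0, ht0⟩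
    · simp [h]
    · have hyK : y ∈ K := hKmem t0 y ht0.out.1
      rw [Set.indicator_of_mem hyK]
      have hsub : {t : ℝ | g (t, y) ∈ S}
          ⊆ {t : ℝ | |‖kR‖ * t + r (g (t, y))| < δ} := by
        intro t ht
        have := ht.out.2
        rwa [hdot t y] at this
      refine (measure_mono hsub).trans ?_
      have hbd := oneDim_measure_le (f := fun t => ‖kR‖ * t + r (g (t, y)))
        (c := ‖kR‖ / 2) (δ := δ) (by positivity) ?_
      · refine hbd.trans (le_of_eq ?_)
        congr 1
        field_simp
        ring
      · intro t1 t2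
        have h1 := hslip y t1 t2
        have h2 : |‖kR‖ * t1 - ‖kR‖ * t2| = ‖kR‖ * |t1 - t2| := by
          rw [← mul_sub, abs_mul, abs_of_nonneg hkpos.le]
        have h3 : ‖kR‖ * |t1 - t2| - ‖kR‖ / 2 * |t1 - t2|
            ≤ |(‖kR‖ * t1 + r (g (t1, y))) - (‖kR‖ * t2 + r (g (t2, y)))| := by
          have h4 : |‖kR‖ * t1 - ‖kR‖ * t2|
              ≤ |(‖kR‖ * t1 + r (g (t1, y))) - (‖kR‖ * t2 + r (g (t2, y)))|
                + |r (g (t1, y)) - r (g (t2, y))| := by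
            have h5 := abs_sub
              ((‖kR‖ * t1 + r (g (t1, y))) - (‖kR‖ * t2 + r (g (t2, y))))
              (r (g (t1, y)) - r (g (t2, y)))
            have h6 : (‖kR‖ * t1 + r (g (t1, y))) - (‖kR‖ * t2 + r (g (t2, y)))
                - (r (g (t1, y)) - r (g (t2, y))) = ‖kR‖ * t1 - ‖kR‖ * t2 := by ring
            rw [h6] at h5
            exact h5
          rw [h2] at h4
          linarith
        calc ‖kR‖ / 2 * |t1 - t2| = ‖kR‖ * |t1 - t2| - ‖kR‖ / 2 * |t1 - t2| := by ring
          _ ≤ _ := h3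
  -- put everything together
  rw [hknorm, key]
  calc ∫⁻ y, volume {t : ℝ | g (t, y) ∈ S}
      ≤ ∫⁻ y, K.indicator (fun _ => ENNReal.ofReal (8 * δ / ‖kR‖)) y :=
        lintegral_mono hslice
    _ = ENNReal.ofReal (8 * δ / ‖kR‖) * volume K := by
        rw [lintegral_indicator (MeasurableSet.univ_pi fun _ => measurableSet_Icc) _,
          setLIntegral_const]
    _ ≤ ENNReal.ofReal (8 * (2 * RE + 1) ^ m * δ / ‖kR‖) := by
        have hK : volume K = ENNReal.ofReal ((2 * RE) ^ m) := by
          rw [hKdef, volume_pi_pi]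
          simp only [Real.volume_Icc]
          rw [Finset.prod_const, Finset.card_univ, Fintype.card_fin,
            ← ENNReal.ofReal_pow (by linarith)]
          congr 2
          ring
        rw [hK, ← ENNReal.ofReal_mul (by positivity)]
        apply ENNReal.ofReal_le_ofReal
        have hpow : (2 * RE) ^ m ≤ (2 * RE + 1) ^ m :=
          pow_le_pow_left₀ (by linarith) (by linarith) m
        calc 8 * δ / ‖kR‖ * (2 * RE) ^ m = 8 * (2 * RE) ^ m * δ / ‖kR‖ := by ring
          _ ≤ 8 * (2 * RE + 1) ^ m * δ / ‖kR‖ := by gcongr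

end
end
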